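/- arXiv:2303.00649 — 5 statements merged into one kernel-verified Lean document; each statement's English description precedes it below -/
import Mathlib

section
/- Let X be a metric space, γ_i:[0,1]→X a sequence of rectifiable curves parametrized by constant speed with Len(γ_i) ≤ L for some L ∈ [0,∞], converging uniformly to a curve γ:[0,1]→X. Then for every lower semicontinuous function g:X→[0,∞], one has ∫_γ g ds ≤ liminf_{i→∞} ∫_{γ_i} g ds. -/
open MeasureTheory Metric Set ENNReal NNReal Filter

noncomputable section

variable {X : Type*} [MetricSpace X] [MeasurableSpace X]

/-- The length of a curve `γ : [0,1] → X`. -/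
def curveLen (γ : ℝ → X) : ℝ≥0∞ := eVariationOn γ (Set.Icc 0 1)

/-- A curve is a continuous map on `[0,1]`. -/
def IsCurve (γ : ℝ → X) : Prop := ContinuousOn γ (Set.Icc 0 1)

/-- A rectifiable curve: continuous with finite length. -/
def IsRectCurve (γ : ℝ → X) : Prop := IsCurve γ ∧ curveLen γ < ⊤

/-- Constant speed parametrization on `[0,1]`: the metric speed equals the length a.e. -/
def IsConstSpeed (γ : ℝ → X) : Prop :=
  HasConstantSpeedOnWith γ (Set.Icc 0 1) (curveLen γ).toNNReal

/-- The path (arc-length) integral `∫_γ g ds` of `g : X → [0,∞]` along a curve `γ`,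
computed through the arc-length (natural) parametrization. -/
def pathIntegral (g : X → ℝ≥0∞) (γ : ℝ → X) : ℝ≥0∞ :=
  ∫⁻ s in Set.Icc (0:ℝ) (curveLen γ).toReal,
    g (naturalParameterization γ (Set.Icc 0 1) 0 s)

/-- `g` is an upper gradient of `f` on the set `A`. -/
def IsUpperGradientOn (g : X → ℝ≥0∞) (f : X → ℝ) (A : Set X) : Prop :=
  ∀ γ : ℝ → X, IsRectCurve γ → (∀ t ∈ Set.Icc (0:ℝ) 1, γ t ∈ A) →
    ENNReal.ofReal |f (γ 1) - f (γ 0)| ≤ pathIntegral g γ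

/-- `g` is an upper gradient of `f`. -/
def IsUpperGradient (g : X → ℝ≥0∞) (f : X → ℝ) : Prop :=
  IsUpperGradientOn g f Set.univ

/-- Membership in the Newtonian space `N^{1,p}(X)`. -/
def MemN1p (p : ℝ) (μ : Measure X) (f : X → ℝ) : Prop :=
  MemLp f (ENNReal.ofReal p) μ ∧
    ∃ g : X → ℝ≥0∞, IsUpperGradient g f ∧ ∫⁻ x, g x ^ p ∂μ < ⊤

/-- `‖f‖_{N^{1,p}}^p` as an extended real: `‖f‖_p^p + inf over upper gradients of ‖g‖_p^p`. -/
def N1pEnorm (p : ℝ) (μ : Measure X) (f : X → ℝ) : ℝ≥0∞ :=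
  (∫⁻ x, ENNReal.ofReal |f x| ^ p ∂μ) +
    ⨅ (g : X → ℝ≥0∞) (_ : IsUpperGradient g f), ∫⁻ x, g x ^ p ∂μ

/-- The Sobolev capacity `Cap_p(E)`. -/
def sobCap (p : ℝ) (μ : Measure X) (E : Set X) : ℝ≥0∞ :=
  ⨅ (u : X → ℝ) (_ : MemN1p p μ u ∧ ∀ x ∈ E, 1 ≤ u x), N1pEnorm p μ u

/-- The `p`-modulus of a curve family. -/
def pModulus (p : ℝ) (μ : Measure X) (Γ : Set (ℝ → X)) : ℝ≥0∞ :=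
  ⨅ (ρ : X → ℝ≥0∞) (_ : Measurable ρ ∧ ∀ γ ∈ Γ, 1 ≤ pathIntegral ρ γ),
    ∫⁻ x, ρ x ^ p ∂μ

/-- `g` is a `p`-weak upper gradient of `f`. -/
def IsWeakUpperGradient (p : ℝ) (μ : Measure X) (g : X → ℝ≥0∞) (f : X → ℝ) : Prop :=
  ∃ Γ₀ : Set (ℝ → X), pModulus p μ Γ₀ = 0 ∧
    ∀ γ : ℝ → X, IsRectCurve γ → γ ∉ Γ₀ →
      ENNReal.ofReal |f (γ 1) - f (γ 0)| ≤ pathIntegral g γ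

/-- Every sequence in `S` has a subsequence converging uniformly on `[0,1]`. -/
def UnifConvSubseq (S : Set (ℝ → X)) : Prop :=
  ∀ γs : ℕ → (ℝ → X), (∀ i, γs i ∈ S) →
    ∃ φ : ℕ → ℕ, StrictMono φ ∧ ∃ γ : ℝ → X,
      TendstoUniformlyOn (fun n => γs (φ n)) γ Filter.atTop (Set.Icc 0 1)

/-- A good function in the sense of the paper: for any family of rectifiable curves,
bounded Borel set `A`, and `δ, L > 0`, the subfamily of constant-speed curves contained in `A`,
with `∫_γ g ≤ L` and `diam(γ) ≥ δ`, is precompact for uniform convergence. -/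
def GoodFunction (g : X → ℝ≥0∞) : Prop :=
  ∀ (Γ : Set (ℝ → X)) (A : Set X), (∀ γ ∈ Γ, IsRectCurve γ) →
    Bornology.IsBounded A → MeasurableSet A → ∀ δ L : ℝ, 0 < δ → 0 < L →
    UnifConvSubseq {γ | γ ∈ Γ ∧ IsConstSpeed γ ∧ (∀ t ∈ Set.Icc (0:ℝ) 1, γ t ∈ A) ∧
      pathIntegral g γ ≤ ENNReal.ofReal L ∧ δ ≤ Metric.diam (γ '' Set.Icc 0 1)}

/-- Length of the discrete path `(p 0, …, p n)`. -/
def dLen (p : ℕ → X) (n : ℕ) : ℝ := ∑ k ∈ Finset.range n, dist (p k) (p (k+1))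

/-- Mesh of the discrete path `(p 0, …, p n)`. -/
def dMesh (p : ℕ → X) (n : ℕ) : ℝ :=
  (((Finset.range n).sup fun k => nndist (p k) (p (k+1))) : ℝ≥0)

/-- Time-partition points of the discrete path `(p 0, …, p n)`. -/
def tPt (p : ℕ → X) (n : ℕ) (l : ℕ) : ℝ :=
  (∑ k ∈ Finset.range l, dist (p k) (p (k+1))) / dLen p n

/-- The value `h(p 0) + ∑ g(p k) d(p k, p (k+1))` of a discrete path. -/
def dPathVal (g h : X → ℝ) (n : ℕ) (p : ℕ → X) : ℝ :=
  h (p 0) + ∑ k ∈ Finset.range n, g (p k) * dist (p k) (p (k+1))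

/-- Admissible discrete paths from `E` to `y` of mesh at most `δ` (non-repeating). -/
def dAdm (E : Set X) (δ : ℝ) (y : X) (n : ℕ) (p : ℕ → X) : Prop :=
  p 0 ∈ E ∧ p n = y ∧ (∀ k ≤ n, ∀ l ≤ n, p k = p l → k = l) ∧
    ∀ k < n, dist (p k) (p (k+1)) ≤ δ

/-- `f(y) = min(inf over admissible discrete paths of h(p₀) + ∑ g(p_k)d(p_k,p_{k+1}), M)`. -/
def dInfFun (E : Set X) (δ M : ℝ) (g h : X → ℝ) (y : X) : ℝ :=
  sInf (insert M {v : ℝ | ∃ (n : ℕ) (p : ℕ → X), dAdm E δ y n p ∧ v = dPathVal g h n p})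

/-- The function `u(x) = min(inf {∫_γ g ds : γ from X∖V to x}, 1)`. -/
def minCurveFun (V : Set X) (g : X → ℝ≥0∞) (x : X) : ℝ :=
  (min 1 (⨅ (γ : ℝ → X) (_ : IsRectCurve γ ∧ γ 0 ∉ V ∧ γ 1 = x),
    pathIntegral g γ)).toReal

/-- Condenser capacity `Cap_p(E,F)`. -/
def condCap (p : ℝ) (μ : Measure X) (E F : Set X) : ℝ≥0∞ :=
  ⨅ (u : X → ℝ) (g : X → ℝ≥0∞)
    (_ : IsUpperGradient g u ∧ (∀ x ∈ E, u x = 0) ∧ (∀ x ∈ F, u x = 1)),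
    ∫⁻ x, g x ^ p ∂μ

/-- Condenser capacity computed with Lipschitz admissible functions. -/
def condCapLip (p : ℝ) (μ : Measure X) (E F : Set X) : ℝ≥0∞ :=
  ⨅ (u : X → ℝ) (g : X → ℝ≥0∞)
    (_ : (∃ K : ℝ≥0, LipschitzWith K u) ∧ IsUpperGradient g u ∧
      (∀ x ∈ E, u x = 0) ∧ (∀ x ∈ F, u x = 1)),
    ∫⁻ x, g x ^ p ∂μ

/-- Membership in the Newtonian space `N^{1,p}(U)` of an open subset `U`. -/
def MemN1pOn (p : ℝ) (μ : Measure X) (f : X → ℝ) (U : Set X) : Prop :=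
  MemLp f (ENNReal.ofReal p) (μ.restrict U) ∧
    ∃ g : X → ℝ≥0∞, IsUpperGradientOn g f U ∧ ∫⁻ x in U, g x ^ p ∂μ < ⊤

/-- `‖f‖_{N^{1,p}(U)}^p` for an open subset `U`. -/
def N1pEnormOn (p : ℝ) (μ : Measure X) (f : X → ℝ) (U : Set X) : ℝ≥0∞ :=
  (∫⁻ x in U, ENNReal.ofReal |f x| ^ p ∂μ) +
    ⨅ (g : X → ℝ≥0∞) (_ : IsUpperGradientOn g f U), ∫⁻ x in U, g x ^ p ∂μ

end

/-- A metric space is locally complete if every point has a complete neighborhood. -/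
def LocallyCompleteSpace (Y : Type*) [MetricSpace Y] : Prop :=
  ∀ y : Y, ∃ U ∈ nhds y, IsComplete U




section AuxProofs

theorem aux_liminf_const_mul (u : ℕ → ℝ≥0∞) {c : ℝ≥0∞} (hc0 : c ≠ 0) (hct : c ≠ ⊤) :
    Filter.atTop.liminf (fun i => c * u i) ≤ c * Filter.atTop.liminf u := by
  have h := ENNReal.liminf_mul_le (f := Filter.atTop) (u := fun _ : ℕ => c) (v := u)
    (Or.inl (by simp [Filter.limsup_const, hc0])) (Or.inl (by simp [Filter.limsup_const, hct]))
  simpa [Filter.limsup_const, Pi.mul_def] using h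

theorem aux_pushforward {a₁ b₁ a₂ b₂ : ℝ} (h₁ : a₁ ≤ b₁) {C : ℝ≥0} {φ : ℝ → ℝ}
    (hm : MonotoneOn φ (Icc a₁ b₁)) (hLip : LipschitzOnWith C φ (Icc a₁ b₁))
    (him : φ '' Icc a₁ b₁ = Icc a₂ b₂) {F : ℝ → ℝ≥0∞} (hF : ContinuousOn F (Icc a₂ b₂)) :
    ∫⁻ s in Icc a₂ b₂, F s ≤ C * ∫⁻ t in Icc a₁ b₁, F (φ t) := by
  classical
  set ψ : ℝ → ℝ := fun t => φ (max a₁ (min b₁ t)) with hψ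
  have hclamp : ∀ t, max a₁ (min b₁ t) ∈ Icc a₁ b₁ := fun t =>
    ⟨le_max_left _ _, max_le h₁ (min_le_left _ _)⟩
  have hψeq : ∀ t ∈ Icc a₁ b₁, ψ t = φ t := by
    intro t ht
    simp [hψ, max_eq_right, min_eq_right, ht.1, ht.2]
  have hψmono : Monotone ψ := by
    intro s t hst
    exact hm (hclamp s) (hclamp t) (max_le_max le_rfl (min_le_min le_rfl hst))
  have hψmeas : Measurable ψ := hψmono.measurable
  have hψmem : ∀ t, ψ t ∈ Icc a₂ b₂ := fun t => him ▸ mem_image_of_mem φ (hclamp t)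
  set μ₀ : Measure ℝ := (C : ℝ≥0∞) • volume.restrict (Icc a₁ b₁) with hμ₀
  set ν : Measure ℝ := Measure.map ψ μ₀ with hν
  have hνapp : ∀ A : Set ℝ, MeasurableSet A → ν A = C * volume (ψ ⁻¹' A ∩ Icc a₁ b₁) := by
    intro A hA
    rw [hν, Measure.map_apply hψmeas hA, hμ₀, Measure.smul_apply,
      Measure.restrict_apply (hψmeas hA)]
    simp
  -- measure inequality
  have hle : volume.restrict (Icc a₂ b₂) ≤ ν := by
    rw [Measure.le_iff]
    intro A hA
    rw [Measure.restrict_apply hA, hνapp A hA]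
    have hsub : A ∩ Icc a₂ b₂ ⊆ ψ '' (ψ ⁻¹' A ∩ Icc a₁ b₁) := by
      rintro x ⟨hxA, hx2⟩
      obtain ⟨t, ht, rfl⟩ := him ▸ hx2
      exact ⟨t, ⟨by simpa [hψeq t ht] using hxA, ht⟩, hψeq t ht⟩
    calc volume (A ∩ Icc a₂ b₂) ≤ volume (ψ '' (ψ ⁻¹' A ∩ Icc a₁ b₁)) := measure_mono hsub
      _ ≤ C * volume (ψ ⁻¹' A ∩ Icc a₁ b₁) := by
          have hLip' : LipschitzOnWith C ψ (ψ ⁻¹' A ∩ Icc a₁ b₁) := by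
            intro x hx y hy
            rw [hψeq x hx.2, hψeq y hy.2]
            exact hLip hx.2 hy.2
          have h := hLip'.hausdorffMeasure_image_le (d := 1) zero_le_one
          rw [MeasureTheory.hausdorffMeasure_real] at h
          simpa [ENNReal.rpow_one] using h
  -- F is a.e. measurable w.r.t. ν
  have hν0 : ν (Icc a₂ b₂)ᶜ = 0 := by
    rw [hνapp _ measurableSet_Icc.compl]
    have : ψ ⁻¹' (Icc a₂ b₂)ᶜ ∩ Icc a₁ b₁ = ∅ := by
      ext t; simp only [mem_inter_iff, mem_preimage, mem_compl_iff, mem_empty_iff_false,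
        iff_false, not_and]
      intro h _; exact h (hψmem t)
    rw [this, measure_empty, mul_zero]
  have hνrestrict : ν.restrict (Icc a₂ b₂) = ν :=
    Measure.restrict_eq_self_of_ae_mem (MeasureTheory.mem_ae_iff.mpr hν0)
  have hFν : AEMeasurable F ν := by
    rw [← hνrestrict]
    exact hF.aemeasurable measurableSet_Icc
  have hFν' : AEMeasurable F (Measure.map ψ μ₀) := hν ▸ hFν
  calc ∫⁻ s in Icc a₂ b₂, F s ≤ ∫⁻ s, F s ∂ν := lintegral_mono' hle (le_refl F)
    _ = ∫⁻ t, F (ψ t) ∂μ₀ := by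
        rw [hν]; exact lintegral_map' hFν' hψmeas.aemeasurable
    _ = C * ∫⁻ t in Icc a₁ b₁, F (ψ t) := by rw [hμ₀, lintegral_smul_measure, smul_eq_mul]
    _ = C * ∫⁻ t in Icc a₁ b₁, F (φ t) := by
        congr 1
        refine setLIntegral_congr_fun measurableSet_Icc ?_
        intro t ht; dsimp only; rw [hψeq t ht]

theorem aux_right_cont {X : Type*} [MetricSpace X] {γ : ℝ → X}
    (hcont : ContinuousOn γ (Icc 0 1)) (hfin : eVariationOn γ (Icc 0 1) ≠ ⊤)
    {t₀ : ℝ} (ht₀ : t₀ ∈ Icc (0:ℝ) 1) {ε : ℝ} (hε : 0 < ε) :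
    ∃ δ > 0, ∀ t ∈ Icc (0:ℝ) 1, t₀ ≤ t → t - t₀ < δ →
      (eVariationOn γ (Icc (0:ℝ) 1 ∩ Icc t₀ t)).toReal < ε := by
  classical
  set s : Set ℝ := Icc (0:ℝ) 1 with hs
  have h1s : (1:ℝ) ∈ s := ⟨zero_le_one, le_rfl⟩
  have hsubfin : ∀ A : Set ℝ, eVariationOn γ (s ∩ A) ≠ ⊤ := fun A =>
    ne_top_of_le_ne_top hfin (eVariationOn.mono γ inter_subset_left)
  have hbv : LocallyBoundedVariationOn γ s := fun x y _ _ => hsubfin (Icc x y)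
  have hdist : ∀ a ∈ s, ∀ b ∈ s, a ≤ b → dist (γ a) (γ b) ≤ variationOnFromTo γ s a b := by
    intro a ha b hb hab
    rw [variationOnFromTo.eq_of_le γ s hab, dist_edist]
    exact ENNReal.toReal_mono (hsubfin _)
      (eVariationOn.edist_le γ ⟨ha, le_rfl, hab⟩ ⟨hb, hab, le_rfl⟩)
  set Ve := eVariationOn γ (s ∩ Icc t₀ 1) with hVe
  have hVetop : Ve ≠ ⊤ := hsubfin _
  -- trivial case bound
  have trivialcase : ∀ t ∈ s, t₀ ≤ t →
      eVariationOn γ (s ∩ Icc t₀ t) ≤ ENNReal.ofReal (ε/2) →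
      (eVariationOn γ (s ∩ Icc t₀ t)).toReal < ε := by
    intro t _ _ hle
    calc (eVariationOn γ (s ∩ Icc t₀ t)).toReal
        ≤ (ENNReal.ofReal (ε/2)).toReal := ENNReal.toReal_mono ENNReal.ofReal_ne_top hle
      _ = ε/2 := ENNReal.toReal_ofReal (half_pos hε).le
      _ < ε := half_lt_self hε
  by_cases hVne : Ve = 0
  · refine ⟨1, one_pos, fun t ht htt₀ _ => trivialcase t ht htt₀ ?_⟩
    refine le_trans (le_trans (eVariationOn.mono γ
      (inter_subset_inter_right _ (Icc_subset_Icc le_rfl ht.2))) hVne.le) zero_le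
  · have hεh : ENNReal.ofReal (ε/2) ≠ 0 := (ENNReal.ofReal_pos.mpr (half_pos hε)).ne'
    have hsub : Ve - ENNReal.ofReal (ε/2) < Ve := ENNReal.sub_lt_self hVetop hVne hεh
    have hsup : Ve - ENNReal.ofReal (ε/2) <
        ⨆ p : ℕ × {u : ℕ → ℝ // Monotone u ∧ ∀ i, u i ∈ s ∩ Icc t₀ 1},
          ∑ i ∈ Finset.range p.1, edist (γ (p.2.1 (i+1))) (γ (p.2.1 i)) := hsub
    obtain ⟨⟨n, u, hu, us⟩, hlt⟩ := lt_iSup_iff.mp hsup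
    have hVle : Ve ≤ (∑ i ∈ Finset.range n, edist (γ (u (i+1))) (γ (u i)))
        + ENNReal.ofReal (ε/2) := tsub_le_iff_right.mp hlt.le
    by_cases hex : ∃ i, t₀ < u i
    · set m := Nat.find hex with hm
      have hum : t₀ < u m := Nat.find_spec hex
      have hueq : ∀ i < m, u i = t₀ := fun i hi =>
        le_antisymm (not_lt.mp (Nat.find_min hex hi)) (us i).2.1
      have hums : u m ∈ s := (us m).1
      have hclaim : (∑ i ∈ Finset.range n, edist (γ (u (i+1))) (γ (u i)))
          ≤ edist (γ (u m)) (γ t₀) + eVariationOn γ (s ∩ Icc (u m) 1) := by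
        rcases lt_or_ge n m with hnm | hmn
        · rw [Finset.sum_eq_zero]
          · exact zero_le
          · intro i hi
            rw [Finset.mem_range] at hi
            rw [hueq i (by omega), hueq (i+1) (by omega)]
            exact edist_self _
        · rw [← Finset.sum_range_add_sum_Ico _ hmn]
          refine add_le_add ?_ ?_
          · rcases Nat.eq_zero_or_pos m with hm0 | hm0
            · simp [hm0]
            · obtain ⟨m', hm'⟩ := Nat.exists_eq_succ_of_ne_zero hm0.ne'
              have hzero : ∑ i ∈ Finset.range m', edist (γ (u (i+1))) (γ (u i)) = 0 :=
                Finset.sum_eq_zero fun i hi => by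
                  have hi' := Finset.mem_range.mp hi
                  rw [hueq i (by omega), hueq (i+1) (by omega)]
                  exact edist_self _
              refine le_of_eq ?_
              rw [hm', Finset.sum_range_succ, hzero, zero_add, hueq m' (by omega)]
          · rw [Finset.sum_Ico_eq_sum_range]
            exact eVariationOn.sum_le (f := γ) (n := n - m) (u := fun j => u (m + j))
              (fun a b hab => hu (Nat.add_le_add_left hab m))
              (fun j => ⟨(us (m+j)).1, hu (Nat.le_add_right m j), (us (m+j)).2.2⟩)
      obtain ⟨δc, hδc, hδcont⟩ : ∃ δ > 0, ∀ x ∈ s, dist x t₀ < δ → dist (γ x) (γ t₀) < ε/2 := by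
        have h := Metric.continuousWithinAt_iff.mp (hcont t₀ ht₀) (ε/2) (half_pos hε)
        obtain ⟨δ, hδ, h⟩ := h
        exact ⟨δ, hδ, fun x hx hxd => h hx hxd⟩
      refine ⟨min δc (u m - t₀), lt_min hδc (sub_pos.mpr hum), fun t ht htt₀ hlt' => ?_⟩
      have htum : t ≤ u m := by
        have := hlt'.trans_le (min_le_right _ _); linarith
      have hgd : dist (γ t) (γ t₀) < ε/2 := by
        refine hδcont t ht ?_
        rw [Real.dist_eq, abs_of_nonneg (by linarith)]
        exact hlt'.trans_le (min_le_left _ _)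
      -- real arithmetic
      have hadd1 : variationOnFromTo γ s t₀ t + variationOnFromTo γ s t (u m)
          = variationOnFromTo γ s t₀ (u m) := variationOnFromTo.add hbv ht₀ ht hums
      have hadd2 : variationOnFromTo γ s t₀ (u m) + variationOnFromTo γ s (u m) 1
          = variationOnFromTo γ s t₀ 1 := variationOnFromTo.add hbv ht₀ hums h1s
      have hVreal : variationOnFromTo γ s t₀ 1 = Ve.toReal := by
        rw [variationOnFromTo.eq_of_le γ s ht₀.2, hVe]
      have hCc : variationOnFromTo γ s (u m) 1
          = (eVariationOn γ (s ∩ Icc (u m) 1)).toReal := by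
        rw [variationOnFromTo.eq_of_le γ s (us m).2.2]
      have hVbound : Ve.toReal ≤ dist (γ (u m)) (γ t₀)
          + (eVariationOn γ (s ∩ Icc (u m) 1)).toReal + ε/2 := by
        have h2 : Ve ≤ edist (γ (u m)) (γ t₀) + eVariationOn γ (s ∩ Icc (u m) 1)
            + ENNReal.ofReal (ε/2) := le_trans hVle (add_le_add_left hclaim _)
        have h3 := ENNReal.toReal_mono (by
          exact ENNReal.add_ne_top.mpr ⟨ENNReal.add_ne_top.mpr
            ⟨edist_ne_top _ _, hsubfin _⟩, ENNReal.ofReal_ne_top⟩) h2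
        rwa [ENNReal.toReal_add (ENNReal.add_ne_top.mpr ⟨edist_ne_top _ _, hsubfin _⟩)
          ENNReal.ofReal_ne_top, ENNReal.toReal_add (edist_ne_top _ _) (hsubfin _),
          ENNReal.toReal_ofReal (half_pos hε).le, ← dist_edist] at h3
      have hB : dist (γ t) (γ (u m)) ≤ variationOnFromTo γ s t (u m) :=
        hdist t ht (u m) hums htum
      have htri : dist (γ (u m)) (γ t₀) ≤ dist (γ (u m)) (γ t) + dist (γ t) (γ t₀) :=
        dist_triangle _ _ _
      have hcomm : dist (γ (u m)) (γ t) = dist (γ t) (γ (u m)) := dist_comm _ _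
      have hgoal : variationOnFromTo γ s t₀ t < ε := by linarith
      rwa [variationOnFromTo.eq_of_le γ s htt₀] at hgoal
    · push_neg at hex
      refine ⟨1, one_pos, fun t ht htt₀ _ => trivialcase t ht htt₀ ?_⟩
      have hsum0 : (∑ i ∈ Finset.range n, edist (γ (u (i+1))) (γ (u i))) = 0 := by
        refine Finset.sum_eq_zero fun i _ => ?_
        have h1 : u i = t₀ := le_antisymm (hex i) (us i).2.1
        have h2 : u (i+1) = t₀ := le_antisymm (hex (i+1)) (us (i+1)).2.1
        rw [h1, h2]; exact edist_self _
      refine le_trans (le_trans (eVariationOn.mono γ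
        (inter_subset_inter_right _ (Icc_subset_Icc le_rfl ht.2))) ?_) le_rfl
      calc eVariationOn γ (s ∩ Icc t₀ 1) = Ve := rfl
        _ ≤ _ + ENNReal.ofReal (ε/2) := hVle
        _ = ENNReal.ofReal (ε/2) := by rw [hsum0, zero_add]

theorem aux_var_cont {X : Type*} [MetricSpace X] {γ : ℝ → X}
    (hcont : ContinuousOn γ (Icc 0 1)) (hfin : eVariationOn γ (Icc 0 1) ≠ ⊤) :
    ContinuousOn (variationOnFromTo γ (Icc 0 1) 0) (Icc (0:ℝ) 1) := by
  have hsubfin : ∀ A : Set ℝ, eVariationOn γ (Icc (0:ℝ) 1 ∩ A) ≠ ⊤ := fun A =>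
    ne_top_of_le_ne_top hfin (eVariationOn.mono γ inter_subset_left)
  have hbv : LocallyBoundedVariationOn γ (Icc 0 1) := fun x y _ _ => hsubfin (Icc x y)
  have h0s : (0:ℝ) ∈ Icc (0:ℝ) 1 := ⟨le_rfl, zero_le_one⟩
  set γR : ℝ → X := fun t => γ (1 - t) with hγR
  have hanti : ∀ A : Set ℝ, AntitoneOn (fun t : ℝ => 1 - t) A := fun A x _ y _ hxy => by
    show (1:ℝ) - y ≤ 1 - x; linarith
  have hvarR : ∀ A : Set ℝ, eVariationOn γR A = eVariationOn γ ((fun t : ℝ => 1 - t) '' A) :=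
    fun A => eVariationOn.comp_eq_of_antitoneOn γ _ (hanti A)
  have hmaps : MapsTo (fun t : ℝ => 1 - t) (Icc 0 1) (Icc 0 1) := fun t ht => by
    constructor
    · show (0:ℝ) ≤ 1 - t; linarith [ht.2]
    · show (1:ℝ) - t ≤ 1; linarith [ht.1]
  have hcontR : ContinuousOn γR (Icc 0 1) :=
    hcont.comp ((continuous_const.sub continuous_id).continuousOn) hmaps
  have himfull : (fun t : ℝ => 1 - t) '' Icc 0 1 = Icc (0:ℝ) 1 := by
    rw [image_const_sub_Icc]; norm_num
  have hfinR : eVariationOn γR (Icc 0 1) ≠ ⊤ := by rw [hvarR, himfull]; exact hfin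
  rw [Metric.continuousOn_iff]
  intro t₀ ht₀ ε hε
  obtain ⟨δR, hδR, hR⟩ := aux_right_cont hcont hfin ht₀ hε
  have ht₀R : (1 - t₀) ∈ Icc (0:ℝ) 1 := hmaps ht₀
  obtain ⟨δL, hδL, hL⟩ := aux_right_cont hcontR hfinR ht₀R hε
  refine ⟨min δR δL, lt_min hδR hδL, fun t ht htd => ?_⟩
  rw [Real.dist_eq] at htd
  rcases le_total t₀ t with hc | hc
  · have habs : |t - t₀| = t - t₀ := abs_of_nonneg (by linarith)
    have hRt := hR t ht hc (by rw [habs] at htd; exact htd.trans_le (min_le_left _ _))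
    have hadd : variationOnFromTo γ (Icc 0 1) 0 t₀ + variationOnFromTo γ (Icc 0 1) t₀ t
        = variationOnFromTo γ (Icc 0 1) 0 t := variationOnFromTo.add hbv h0s ht₀ ht
    have hnn : 0 ≤ variationOnFromTo γ (Icc 0 1) t₀ t := variationOnFromTo.nonneg_of_le _ _ hc
    rw [variationOnFromTo.eq_of_le γ (Icc 0 1) hc] at hadd hnn
    rw [Real.dist_eq, abs_of_nonneg (by linarith)]
    linarith [hRt]
  · have hLt := hL (1 - t) (hmaps ht) (by linarith)
      (by rw [abs_of_nonpos (by linarith)] at htd; have := htd.trans_le (min_le_right _ _); linarith)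
    have heq : eVariationOn γR (Icc 0 1 ∩ Icc (1 - t₀) (1 - t))
        = eVariationOn γ (Icc 0 1 ∩ Icc t t₀) := by
      rw [hvarR, Set.image_inter (fun x y h => by simpa using h), himfull,
        image_const_sub_Icc]
      norm_num
    rw [heq] at hLt
    have hadd : variationOnFromTo γ (Icc 0 1) 0 t + variationOnFromTo γ (Icc 0 1) t t₀
        = variationOnFromTo γ (Icc 0 1) 0 t₀ := variationOnFromTo.add hbv h0s ht ht₀
    have hnn : 0 ≤ variationOnFromTo γ (Icc 0 1) t t₀ := variationOnFromTo.nonneg_of_le _ _ hc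
    rw [variationOnFromTo.eq_of_le γ (Icc 0 1) hc] at hadd hnn
    rw [Real.dist_eq, abs_of_nonpos (by linarith)]
    linarith [hLt]

theorem aux_var_image {X : Type*} [MetricSpace X] {γ : ℝ → X}
    (hcont : ContinuousOn γ (Icc 0 1)) (hfin : eVariationOn γ (Icc 0 1) ≠ ⊤) :
    variationOnFromTo γ (Icc 0 1) 0 '' Icc (0:ℝ) 1
      = Icc 0 (eVariationOn γ (Icc 0 1)).toReal := by
  have hsubfin : ∀ A : Set ℝ, eVariationOn γ (Icc (0:ℝ) 1 ∩ A) ≠ ⊤ := fun A =>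
    ne_top_of_le_ne_top hfin (eVariationOn.mono γ inter_subset_left)
  have hbv : LocallyBoundedVariationOn γ (Icc 0 1) := fun x y _ _ => hsubfin (Icc x y)
  have h0s : (0:ℝ) ∈ Icc (0:ℝ) 1 := ⟨le_rfl, zero_le_one⟩
  have h1s : (1:ℝ) ∈ Icc (0:ℝ) 1 := ⟨zero_le_one, le_rfl⟩
  have hmono := variationOnFromTo.monotoneOn hbv h0s
  have hσ0 : variationOnFromTo γ (Icc 0 1) 0 0 = 0 := variationOnFromTo.self _ _ 0
  have hσ1 : variationOnFromTo γ (Icc 0 1) 0 1 = (eVariationOn γ (Icc 0 1)).toReal := by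
    rw [variationOnFromTo.eq_of_le γ (Icc 0 1) zero_le_one, inter_self]
  apply Subset.antisymm
  · rintro x ⟨t, ht, rfl⟩
    constructor
    · have h := hmono h0s ht ht.1; rw [hσ0] at h; exact h
    · have h := hmono ht h1s ht.2; rw [hσ1] at h; exact h
  · have := intermediate_value_Icc zero_le_one (aux_var_cont hcont hfin)
    rw [hσ0, hσ1] at this
    exact this

theorem aux_nat_eq {X : Type*} [MetricSpace X] {γ : ℝ → X}
    (hfin : eVariationOn γ (Icc 0 1) ≠ ⊤) {t : ℝ} (ht : t ∈ Icc (0:ℝ) 1) :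
    naturalParameterization γ (Icc 0 1) 0 (variationOnFromTo γ (Icc 0 1) 0 t) = γ t := by
  have hbv : LocallyBoundedVariationOn γ (Icc 0 1) := fun x y _ _ =>
    ne_top_of_le_ne_top hfin (eVariationOn.mono γ inter_subset_left)
  exact edist_eq_zero.mp
    (edist_naturalParameterization_eq_zero hbv ⟨le_rfl, zero_le_one⟩ ht)

theorem aux_nat_lip {X : Type*} [MetricSpace X] {γ : ℝ → X}
    (hcont : ContinuousOn γ (Icc 0 1)) (hfin : eVariationOn γ (Icc 0 1) ≠ ⊤) :
    LipschitzOnWith 1 (naturalParameterization γ (Icc 0 1) 0)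
      (Icc 0 (eVariationOn γ (Icc 0 1)).toReal) := by
  have hbv : LocallyBoundedVariationOn γ (Icc 0 1) := fun x y _ _ =>
    ne_top_of_le_ne_top hfin (eVariationOn.mono γ inter_subset_left)
  have hunit := has_unit_speed_naturalParameterization γ hbv
    (show (0:ℝ) ∈ Icc (0:ℝ) 1 from ⟨le_rfl, zero_le_one⟩)
  rw [HasUnitSpeedOn, aux_var_image hcont hfin] at hunit
  set I := Icc (0:ℝ) (eVariationOn γ (Icc 0 1)).toReal
  intro x hx y hy
  rcases le_total x y with hxy | hxy
  · calc edist (naturalParameterization γ (Icc 0 1) 0 x) (naturalParameterization γ (Icc 0 1) 0 y)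
        ≤ eVariationOn (naturalParameterization γ (Icc 0 1) 0) (I ∩ Icc x y) :=
          eVariationOn.edist_le _ ⟨hx, le_rfl, hxy⟩ ⟨hy, hxy, le_rfl⟩
      _ = ENNReal.ofReal (1 * (y - x)) := hunit hx hy
      _ ≤ 1 * edist x y := by
          simp only [one_mul, ENNReal.coe_one, edist_dist, Real.dist_eq]
          exact ENNReal.ofReal_le_ofReal (by rw [abs_sub_comm]; exact le_abs_self _)
  · rw [edist_comm]
    calc edist (naturalParameterization γ (Icc 0 1) 0 y) (naturalParameterization γ (Icc 0 1) 0 x)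
        ≤ eVariationOn (naturalParameterization γ (Icc 0 1) 0) (I ∩ Icc y x) :=
          eVariationOn.edist_le _ ⟨hy, le_rfl, hxy⟩ ⟨hx, hxy, le_rfl⟩
      _ = ENNReal.ofReal (1 * (x - y)) := hunit hy hx
      _ ≤ 1 * edist x y := by
          simp only [one_mul, ENNReal.coe_one, edist_dist, Real.dist_eq]
          exact ENNReal.ofReal_le_ofReal (le_abs_self _)

noncomputable def gApprox {X : Type*} [MetricSpace X] (g : X → ℝ≥0∞) (k : ℕ) (x : X) : ℝ≥0∞ :=
  ⨅ y : X, (min (g y) k + k * edist x y)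

theorem gApprox_le {X : Type*} [MetricSpace X] (g : X → ℝ≥0∞) (k : ℕ) (x : X) :
    gApprox g k x ≤ g x := by
  refine le_trans (iInf_le _ x) ?_
  simp [min_le_left]

theorem gApprox_mono {X : Type*} [MetricSpace X] (g : X → ℝ≥0∞) {k l : ℕ} (hkl : k ≤ l) (x : X) :
    gApprox g k x ≤ gApprox g l x := by
  have hcast : (k : ℝ≥0∞) ≤ (l : ℝ≥0∞) := by exact_mod_cast hkl
  exact le_iInf fun y => le_trans (iInf_le _ y)
    (add_le_add (min_le_min le_rfl hcast) (mul_le_mul_left hcast _))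

theorem gApprox_le_coe {X : Type*} [MetricSpace X] (g : X → ℝ≥0∞) (k : ℕ) (x : X) :
    gApprox g k x ≤ (k : ℝ≥0∞) := le_trans (iInf_le _ x) (by simp [min_le_right])

theorem gApprox_lip {X : Type*} [MetricSpace X] (g : X → ℝ≥0∞) (k : ℕ) (x x' : X) :
    gApprox g k x ≤ gApprox g k x' + k * edist x x' := by
  rw [← tsub_le_iff_right]
  refine le_iInf fun y => tsub_le_iff_right.mpr (le_trans (iInf_le _ y) ?_)
  calc min (g y) k + k * edist x y ≤ min (g y) k + k * (edist x' y + edist x x') := by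
        gcongr
        exact le_trans (edist_triangle x x' y) (le_of_eq (by rw [add_comm, edist_comm x' y]))
    _ = min (g y) k + k * edist x' y + k * edist x x' := by ring

theorem gApprox_continuous {X : Type*} [MetricSpace X] (g : X → ℝ≥0∞) (k : ℕ) :
    Continuous (gApprox g k) := by
  rw [continuous_iff_continuousAt]
  intro x
  rw [ContinuousAt, ENNReal.tendsto_nhds (lt_of_le_of_lt (gApprox_le_coe g k x)
    (ENNReal.natCast_lt_top k)).ne]
  intro ε hε
  rcases eq_or_ne ε ⊤ with rfl | hεtop
  · filter_upwards with y
    exact ⟨by rw [tsub_le_iff_right]; simp, by simp⟩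
  · set δ : ℝ := ε.toReal / (k + 1) with hδ
    have hδpos : 0 < δ := by
      apply div_pos (ENNReal.toReal_pos hε.ne' hεtop)
      positivity
    have hk : ∀ y : X, dist y x < δ → (k : ℝ≥0∞) * edist x y ≤ ε := by
      intro y hy
      have h1 : edist x y ≤ ENNReal.ofReal δ := by
        rw [edist_dist, dist_comm]
        exact ENNReal.ofReal_le_ofReal hy.le
      calc (k : ℝ≥0∞) * edist x y ≤ (k : ℝ≥0∞) * ENNReal.ofReal δ := mul_le_mul_right h1 _
        _ = ENNReal.ofReal (k * δ) := by
            rw [ENNReal.ofReal_mul (by positivity)]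
            norm_num
        _ ≤ ε := by
            rw [← ENNReal.ofReal_toReal hεtop]
            apply ENNReal.ofReal_le_ofReal
            have hkk : (0:ℝ) < (k:ℝ) + 1 := by positivity
            calc (k:ℝ) * (ε.toReal / ((k:ℝ) + 1)) = ε.toReal * (k:ℝ) / ((k:ℝ)+1) := by ring
              _ ≤ ε.toReal := by
                  rw [div_le_iff₀ hkk]
                  nlinarith [ENNReal.toReal_nonneg (a := ε)]
    filter_upwards [Metric.ball_mem_nhds x hδpos] with y hy
    have hy' : dist y x < δ := by rwa [Metric.mem_ball] at hy
    constructor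
    · rw [tsub_le_iff_right]
      calc gApprox g k x ≤ gApprox g k y + k * edist x y := gApprox_lip g k x y
        _ ≤ gApprox g k y + ε := add_le_add_right (hk y hy') _
    · calc gApprox g k y ≤ gApprox g k x + k * edist y x := gApprox_lip g k y x
        _ ≤ gApprox g k x + ε := by
            refine add_le_add_right ?_ _
            rw [edist_comm]
            exact hk y hy'

theorem gApprox_iSup {X : Type*} [MetricSpace X] {g : X → ℝ≥0∞} (hg : LowerSemicontinuous g)
    (x : X) : ⨆ k : ℕ, gApprox g k x = g x := by
  refine le_antisymm (iSup_le fun k => gApprox_le g k x) ?_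
  by_contra hlt
  push_neg at hlt
  obtain ⟨c, hc1, hc2⟩ := exists_between hlt
  have hctop : c ≠ ⊤ := (hc2.trans_le le_top).ne
  obtain ⟨δ, hδpos, hδ⟩ : ∃ δ > 0, ∀ y : X, dist y x < δ → c < g y := by
    have h := hg x c hc2
    rw [Metric.eventually_nhds_iff] at h
    obtain ⟨δ, hδ, h⟩ := h
    exact ⟨δ, hδ, fun y hy => h hy⟩
  obtain ⟨k, hk1, hk2⟩ : ∃ k : ℕ, c ≤ (k : ℝ≥0∞) ∧ c ≤ (k : ℝ≥0∞) * ENNReal.ofReal δ := by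
    obtain ⟨k, hk⟩ := exists_nat_ge (c.toReal / δ + c.toReal)
    refine ⟨k, ?_, ?_⟩
    · rw [← ENNReal.ofReal_toReal hctop, ← ENNReal.ofReal_natCast]
      apply ENNReal.ofReal_le_ofReal
      have : 0 ≤ c.toReal / δ := by positivity
      linarith
    · rw [← ENNReal.ofReal_natCast, ← ENNReal.ofReal_mul (by positivity),
        ← ENNReal.ofReal_toReal hctop]
      apply ENNReal.ofReal_le_ofReal
      have h1 : c.toReal / δ ≤ (k:ℝ) := by linarith [ENNReal.toReal_nonneg (a := c)]
      exact (div_le_iff₀ hδpos).mp h1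
  have : c ≤ gApprox g k x := by
    refine le_iInf fun y => ?_
    rcases lt_or_ge (dist y x) δ with hy | hy
    · calc c = min c (k:ℝ≥0∞) := (min_eq_left hk1).symm
        _ ≤ min (g y) k := min_le_min (hδ y hy).le le_rfl
        _ ≤ _ := le_add_right le_rfl
    · calc c ≤ (k : ℝ≥0∞) * ENNReal.ofReal δ := hk2
        _ ≤ (k : ℝ≥0∞) * edist x y := by
            refine mul_le_mul_right ?_ _
            rw [edist_dist, dist_comm]
            exact ENNReal.ofReal_le_ofReal hy
        _ ≤ _ := le_add_left le_rfl
  exact lt_irrefl c (lt_of_le_of_lt (this.trans (le_iSup (fun k => gApprox g k x) k)) hc1)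

/-- Zero integral of a continuous function on `[0,1]` forces the function to vanish. -/
theorem aux_zero_on_unit {F : ℝ → ℝ≥0∞} (hF : ContinuousOn F (Icc 0 1))
    (h : ∫⁻ t in Icc (0:ℝ) 1, F t = 0) : ∀ t ∈ Icc (0:ℝ) 1, F t = 0 := by
  intro t₀ ht₀
  by_contra hne
  obtain ⟨c, hc1, hc2⟩ := exists_between (pos_iff_ne_zero.mpr hne)
  have hpre : F ⁻¹' (Ioi c) ∈ nhdsWithin t₀ (Icc (0:ℝ) 1) :=
    hF t₀ ht₀ (isOpen_Ioi.mem_nhds hc2)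
  rw [mem_nhdsWithin] at hpre
  obtain ⟨U, hUopen, hU0, hUsub⟩ := hpre
  obtain ⟨δ, hδpos, hball⟩ := Metric.isOpen_iff.mp hUopen t₀ hU0
  set a' := max 0 (t₀ - δ/2) with ha'
  set b' := min 1 (t₀ + δ/2) with hb'
  have hab : a' < b' := by
    apply max_lt
    · exact lt_min one_pos (by linarith [ht₀.1])
    · exact lt_min (by linarith [ht₀.2]) (by linarith)
  have hsub : Ioo a' b' ⊆ {x | F x ≠ 0} ∩ Icc (0:ℝ) 1 := by
    intro x hx
    have hx1 : (0:ℝ) ≤ x := le_of_lt (lt_of_le_of_lt (le_max_left _ _) hx.1)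
    have hx2 : x ≤ 1 := le_of_lt (lt_of_lt_of_le hx.2 (min_le_left _ _))
    have hxI : x ∈ Icc (0:ℝ) 1 := ⟨hx1, hx2⟩
    have hxb : x ∈ Metric.ball t₀ δ := by
      rw [Metric.mem_ball, Real.dist_eq]
      have h1 : t₀ - δ/2 ≤ a' := le_max_right _ _
      have h2 : b' ≤ t₀ + δ/2 := min_le_right _ _
      rw [abs_lt]
      constructor <;> [linarith [hx.1]; linarith [hx.2]]
    have hcx : c < F x := hUsub ⟨hball hxb, hxI⟩
    exact ⟨(hc1.trans hcx).ne', hxI⟩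
  have hae : ∀ᵐ x ∂(volume.restrict (Icc (0:ℝ) 1)), F x = 0 :=
    (lintegral_eq_zero_iff' (hF.aemeasurable measurableSet_Icc)).mp h
  have hnull : volume.restrict (Icc (0:ℝ) 1) {x | ¬ F x = 0} = 0 :=
    MeasureTheory.ae_iff.mp hae
  rw [Measure.restrict_apply' measurableSet_Icc] at hnull
  have hle : volume (Ioo a' b') ≤ volume ({x | ¬ F x = 0} ∩ Icc (0:ℝ) 1) :=
    measure_mono hsub
  rw [hnull, Real.volume_Ioo] at hle
  exact absurd (le_antisymm hle zero_le) (ENNReal.ofReal_pos.mpr (by linarith)).ne'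

/-- path integral of a continuous function along a constant speed rectifiable curve. -/
theorem aux_pathIntegral_eq {X : Type*} [MetricSpace X] {c : ℝ → X}
    (hrect : IsRectCurve c) (hspeed : IsConstSpeed c) {ρ : X → ℝ≥0∞} (hρ : Continuous ρ) :
    pathIntegral ρ c = curveLen c * ∫⁻ t in Icc (0:ℝ) 1, ρ (c t) := by
  have htop : curveLen c ≠ ⊤ := hrect.2.ne
  by_cases hℓ0 : curveLen c = 0
  · have hres : (volume : Measure ℝ).restrict (Icc (0:ℝ) (curveLen c).toReal) = 0 := by
      rw [hℓ0]
      simp only [ENNReal.toReal_zero, Set.Icc_self]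
      exact Measure.restrict_eq_zero.mpr Real.volume_singleton
    rw [pathIntegral, hres, lintegral_zero_measure, hℓ0, zero_mul]
  · set ℓr := (curveLen c).toReal with hℓr
    have hℓrpos : 0 < ℓr := ENNReal.toReal_pos hℓ0 htop
    have hfin : eVariationOn c (Icc 0 1) ≠ ⊤ := htop
    obtain ⟨hbv, hvft⟩ := hasConstantSpeedOnWith_iff_variationOnFromTo_eq.mp hspeed
    have h0s : (0:ℝ) ∈ Icc (0:ℝ) 1 := ⟨le_rfl, zero_le_one⟩
    have hσ : ∀ t ∈ Icc (0:ℝ) 1, variationOnFromTo c (Icc 0 1) 0 t = ℓr * t := by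
      intro t ht
      rw [hvft h0s ht, sub_zero]
      rfl
    have hnat : ∀ t ∈ Icc (0:ℝ) 1, naturalParameterization c (Icc 0 1) 0 (ℓr * t) = c t := by
      intro t ht
      rw [← hσ t ht]
      exact aux_nat_eq hfin ht
    have hmaps : ∀ s_ ∈ Icc (0:ℝ) ℓr, s_ / ℓr ∈ Icc (0:ℝ) 1 := by
      intro s_ hs
      exact ⟨div_nonneg hs.1 hℓrpos.le, (div_le_one hℓrpos).mpr hs.2⟩
    have hnat' : ∀ s_ ∈ Icc (0:ℝ) ℓr, naturalParameterization c (Icc 0 1) 0 s_ = c (s_ / ℓr) := by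
      intro s_ hs
      have := hnat (s_ / ℓr) (hmaps s_ hs)
      rwa [mul_comm, div_mul_cancel₀ _ hℓrpos.ne'] at this
    have hFc : ContinuousOn (fun s_ => ρ (naturalParameterization c (Icc 0 1) 0 s_))
        (Icc 0 ℓr) := by
      refine ContinuousOn.congr (f := fun s_ => ρ (c (s_ / ℓr))) ?_ ?_
      · exact hρ.comp_continuousOn (hrect.1.comp (continuous_id.div_const ℓr).continuousOn hmaps)
      · intro s_ hs
        show ρ (naturalParameterization c (Icc 0 1) 0 s_) = ρ (c (s_ / ℓr))
        rw [hnat' s_ hs]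
    have hρc : ContinuousOn (fun t => ρ (c t)) (Icc 0 1) := hρ.comp_continuousOn hrect.1
    -- upper bound
    have hup : pathIntegral ρ c ≤ curveLen c * ∫⁻ t in Icc (0:ℝ) 1, ρ (c t) := by
      have hφm : MonotoneOn (fun t : ℝ => ℓr * t) (Icc 0 1) := fun a _ b _ hab =>
        mul_le_mul_of_nonneg_left hab hℓrpos.le
      have hφl : LipschitzOnWith (curveLen c).toNNReal (fun t : ℝ => ℓr * t) (Icc 0 1) := by
        refine LipschitzWith.lipschitzOnWith (LipschitzWith.of_dist_le_mul fun x y => ?_)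
        rw [Real.dist_eq, Real.dist_eq, ← mul_sub, abs_mul, abs_of_nonneg hℓrpos.le]
        rfl
      have hφim : (fun t : ℝ => ℓr * t) '' Icc 0 1 = Icc 0 ℓr := by
        rw [image_mul_left_Icc hℓrpos.le zero_le_one, mul_zero, mul_one]
      have h := aux_pushforward zero_le_one hφm hφl hφim hFc
      rw [pathIntegral]
      refine le_trans h ?_
      rw [ENNReal.coe_toNNReal htop]
      refine mul_le_mul_right (le_of_eq ?_) _
      refine setLIntegral_congr_fun measurableSet_Icc ?_
      intro t ht
      dsimp only
      rw [hnat t ht]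
    -- lower bound
    have hdown : curveLen c * ∫⁻ t in Icc (0:ℝ) 1, ρ (c t) ≤ pathIntegral ρ c := by
      have hφm : MonotoneOn (fun s_ : ℝ => ℓr⁻¹ * s_) (Icc 0 ℓr) := fun a _ b _ hab =>
        mul_le_mul_of_nonneg_left hab (by positivity)
      have hφl : LipschitzOnWith (ℓr⁻¹).toNNReal (fun s_ : ℝ => ℓr⁻¹ * s_) (Icc 0 ℓr) := by
        refine LipschitzWith.lipschitzOnWith (LipschitzWith.of_dist_le_mul fun x y => ?_)
        rw [Real.dist_eq, Real.dist_eq, ← mul_sub, abs_mul, abs_of_nonneg (by positivity : (0:ℝ) ≤ ℓr⁻¹), Real.coe_toNNReal _ (by positivity : (0:ℝ) ≤ ℓr⁻¹)]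
      have hφim : (fun s_ : ℝ => ℓr⁻¹ * s_) '' Icc 0 ℓr = Icc 0 1 := by
        rw [image_mul_left_Icc (by positivity : (0:ℝ) ≤ ℓr⁻¹) hℓrpos.le, mul_zero,
          inv_mul_cancel₀ hℓrpos.ne']
      have h := aux_pushforward hℓrpos.le hφm hφl hφim hρc
      have hcongr : ∫⁻ s_ in Icc (0:ℝ) ℓr, ρ (c (ℓr⁻¹ * s_))
          = ∫⁻ s_ in Icc (0:ℝ) ℓr, ρ (naturalParameterization c (Icc 0 1) 0 s_) := by
        refine setLIntegral_congr_fun measurableSet_Icc ?_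
        intro s_ hs
        dsimp only
        rw [hnat' s_ hs, inv_mul_eq_div]
      rw [hcongr] at h
      have hcoe : ((ℓr⁻¹).toNNReal : ℝ≥0∞) = ENNReal.ofReal ℓr⁻¹ := rfl
      calc curveLen c * ∫⁻ t in Icc (0:ℝ) 1, ρ (c t)
          ≤ curveLen c * ((ℓr⁻¹).toNNReal
            * ∫⁻ s_ in Icc (0:ℝ) ℓr, ρ (naturalParameterization c (Icc 0 1) 0 s_)) :=
            mul_le_mul_right h _
        _ = pathIntegral ρ c := by
            have hone : curveLen c * ((ℓr⁻¹).toNNReal : ℝ≥0∞) = 1 := by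
              rw [hcoe]
              nth_rewrite 1 [← ENNReal.ofReal_toReal htop]
              rw [← hℓr, ← ENNReal.ofReal_mul hℓrpos.le, mul_inv_cancel₀ hℓrpos.ne',
                ENNReal.ofReal_one]
            rw [pathIntegral, ← hℓr, ← mul_assoc, hone, one_mul]
    exact le_antisymm hup hdown

end AuxProofs

/-- lower semicontinuity of path integrals under uniform convergence. -/
theorem stmt1 {X : Type*} [MetricSpace X]
    (γs : ℕ → ℝ → X) (γ : ℝ → X) (L : ℝ≥0∞)
    (hcurve : ∀ i, IsRectCurve (γs i)) (hspeed : ∀ i, IsConstSpeed (γs i))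
    (hlen : ∀ i, curveLen (γs i) ≤ L)
    (hγ : IsCurve γ)
    (hconv : TendstoUniformlyOn γs γ Filter.atTop (Set.Icc 0 1))
    (g : X → ℝ≥0∞) (hg : LowerSemicontinuous g) :
    pathIntegral g γ ≤ Filter.atTop.liminf (fun i => pathIntegral g (γs i)) := by
  classical
  by_cases hℓtop : curveLen γ = ⊤
  · have h0 : pathIntegral g γ = 0 := by
      have hres : (volume : Measure ℝ).restrict (Icc (0:ℝ) (curveLen γ).toReal) = 0 := by
        rw [hℓtop]
        simp only [ENNReal.toReal_top, Set.Icc_self]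
        exact Measure.restrict_eq_zero.mpr Real.volume_singleton
      rw [pathIntegral, hres, lintegral_zero_measure]
    rw [h0]
    exact zero_le
  · have hγc : ContinuousOn γ (Icc 0 1) := hγ
    have hfin : eVariationOn γ (Icc 0 1) ≠ ⊤ := hℓtop
    have hnatc : ContinuousOn (naturalParameterization γ (Icc 0 1) 0)
        (Icc 0 (curveLen γ).toReal) := (aux_nat_lip hγc hfin).continuousOn
    have hMC : pathIntegral g γ = ⨆ k : ℕ, ∫⁻ s in Icc (0:ℝ) (curveLen γ).toReal,
        gApprox g k (naturalParameterization γ (Icc 0 1) 0 s) := by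
      rw [pathIntegral,
        setLIntegral_congr_fun measurableSet_Icc
          (fun s _ => (gApprox_iSup hg
            (naturalParameterization γ (Icc 0 1) 0 s)).symm)]
      exact lintegral_iSup'
        (fun k => ((gApprox_continuous g k).comp_continuousOn hnatc).aemeasurable
          measurableSet_Icc)
        (Eventually.of_forall fun s k l hkl => gApprox_mono g hkl _)
    rw [hMC]
    refine iSup_le fun k => ?_
    set ρ := gApprox g k with hρdef
    have hρcont : Continuous ρ := gApprox_continuous g k
    have hbound : ∀ i : ℕ, curveLen (γs i) * ∫⁻ t in Icc (0:ℝ) 1, ρ (γs i t)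
        ≤ pathIntegral g (γs i) := by
      intro i
      rw [← aux_pathIntegral_eq (hcurve i) (hspeed i) hρcont]
      exact lintegral_mono fun s => gApprox_le g k _
    have hRHS : Filter.atTop.liminf (fun i => curveLen (γs i) * ∫⁻ t in Icc (0:ℝ) 1, ρ (γs i t))
        ≤ Filter.atTop.liminf (fun i => pathIntegral g (γs i)) :=
      Filter.liminf_le_liminf (Eventually.of_forall hbound)
    refine le_trans ?_ hRHS
    have hworse : ∀ t ∈ Icc (0:ℝ) 1, ρ (γ t) = Filter.atTop.liminf (fun i => ρ (γs i t)) :=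
      fun t ht => ((hρcont.tendsto (γ t)).comp (hconv.tendsto_at ht)).liminf_eq.symm
    have hAle : (∫⁻ t in Icc (0:ℝ) 1, ρ (γ t))
        ≤ Filter.atTop.liminf (fun i => ∫⁻ t in Icc (0:ℝ) 1, ρ (γs i t)) := by
      calc (∫⁻ t in Icc (0:ℝ) 1, ρ (γ t))
          = ∫⁻ t in Icc (0:ℝ) 1, Filter.atTop.liminf (fun i => ρ (γs i t)) :=
            setLIntegral_congr_fun measurableSet_Icc
              (fun t ht => hworse t ht)
        _ ≤ _ := lintegral_liminf_le'
            (fun i => (hρcont.comp_continuousOn ((hcurve i).1)).aemeasurable measurableSet_Icc)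
    have hprod : Filter.atTop.liminf (fun i => curveLen (γs i)) * (∫⁻ t in Icc (0:ℝ) 1, ρ (γ t))
        ≤ Filter.atTop.liminf
          (fun i => curveLen (γs i) * ∫⁻ t in Icc (0:ℝ) 1, ρ (γs i t)) := by
      refine le_trans (mul_le_mul_right hAle _) ?_
      have h := ENNReal.le_liminf_mul (f := Filter.atTop) (u := fun i => curveLen (γs i))
        (v := fun i => ∫⁻ t in Icc (0:ℝ) 1, ρ (γs i t))
      simpa [Pi.mul_def] using h
    by_cases hL₀top : Filter.atTop.liminf (fun i => curveLen (γs i)) = ⊤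
    · by_cases hA0 : (∫⁻ t in Icc (0:ℝ) 1, ρ (γ t)) = 0
      · have hzero : ∀ t ∈ Icc (0:ℝ) 1, ρ (γ t) = 0 :=
          aux_zero_on_unit (hρcont.comp_continuousOn hγc) hA0
        have hnzero : ∀ s_ ∈ Icc (0:ℝ) (curveLen γ).toReal,
            ρ (naturalParameterization γ (Icc 0 1) 0 s_) = 0 := by
          intro s_ hs
          have hs' : s_ ∈ variationOnFromTo γ (Icc 0 1) 0 '' Icc (0:ℝ) 1 := by
            rw [aux_var_image hγc hfin]
            exact hs
          obtain ⟨t, ht, hts⟩ := hs'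
          rw [← hts, aux_nat_eq hfin ht]
          exact hzero t ht
        calc (∫⁻ s_ in Icc (0:ℝ) (curveLen γ).toReal,
              ρ (naturalParameterization γ (Icc 0 1) 0 s_))
            = ∫⁻ _ in Icc (0:ℝ) (curveLen γ).toReal, 0 :=
              setLIntegral_congr_fun measurableSet_Icc
                (fun s_ hs => hnzero s_ hs)
          _ = 0 := lintegral_const 0 |>.trans (zero_mul _)
          _ ≤ _ := zero_le
      · have htopliminf : Filter.atTop.liminf
            (fun i => curveLen (γs i) * ∫⁻ t in Icc (0:ℝ) 1, ρ (γs i t)) = ⊤ := by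
          refine top_le_iff.mp ?_
          refine le_trans (le_of_eq ?_) hprod
          rw [hL₀top, ENNReal.top_mul hA0]
        rw [htopliminf]
        exact le_top
    · -- Lipschitz case
      set L₀ := Filter.atTop.liminf (fun i => curveLen (γs i)) with hL₀def
      have h0s : (0:ℝ) ∈ Icc (0:ℝ) 1 := ⟨le_rfl, zero_le_one⟩
      have hbv : LocallyBoundedVariationOn γ (Icc 0 1) := fun x y _ _ =>
        ne_top_of_le_ne_top hfin (eVariationOn.mono γ inter_subset_left)
      have key : ∀ a ∈ Icc (0:ℝ) 1, ∀ b ∈ Icc (0:ℝ) 1, a ≤ b →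
          edist (γ a) (γ b) ≤ (L₀.toNNReal : ℝ≥0∞) * edist a b := by
        intro a ha b hb hab
        have hedist : ∀ i, edist (γs i a) (γs i b)
            ≤ curveLen (γs i) * ENNReal.ofReal (b - a) := by
          intro i
          have h1 : edist (γs i a) (γs i b)
              ≤ eVariationOn (γs i) (Icc 0 1 ∩ Icc a b) :=
            eVariationOn.edist_le _ ⟨ha, le_rfl, hab⟩ ⟨hb, hab, le_rfl⟩
          have h2 := hspeed i ha hb
          rw [h2, ENNReal.ofReal_mul (by positivity), ENNReal.ofReal_coe_nnreal,
            ENNReal.coe_toNNReal (hcurve i).2.ne] at h1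
          exact h1
        have hlim : Filter.Tendsto (fun i => edist (γs i a) (γs i b)) Filter.atTop
            (nhds (edist (γ a) (γ b))) :=
          (hconv.tendsto_at ha).edist (hconv.tendsto_at hb)
        rcases eq_or_lt_of_le hab with rfl | hab'
        · simp
        · have hc0 : ENNReal.ofReal (b - a) ≠ 0 :=
            (ENNReal.ofReal_pos.mpr (by linarith)).ne'
          calc edist (γ a) (γ b)
              = Filter.atTop.liminf (fun i => edist (γs i a) (γs i b)) :=
                hlim.liminf_eq.symm
            _ ≤ Filter.atTop.liminf
                (fun i => ENNReal.ofReal (b - a) * curveLen (γs i)) := by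
                refine Filter.liminf_le_liminf (Eventually.of_forall fun i => ?_)
                rw [mul_comm]
                exact hedist i
            _ ≤ ENNReal.ofReal (b - a) * L₀ :=
                aux_liminf_const_mul _ hc0 ENNReal.ofReal_ne_top
            _ = L₀.toNNReal * edist a b := by
                rw [mul_comm, ENNReal.coe_toNNReal hL₀top, edist_dist, Real.dist_eq,
                  abs_of_nonpos (by linarith), neg_sub]
      have hγlip : LipschitzOnWith L₀.toNNReal γ (Icc 0 1) := by
        intro x hx y hy
        rcases le_total x y with hxy | hxy
        · exact key x hx y hy hxy
        · rw [edist_comm, edist_comm x y]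
          exact key y hy x hx hxy
      have hvar : ∀ x ∈ Icc (0:ℝ) 1, ∀ y ∈ Icc (0:ℝ) 1, x ≤ y →
          eVariationOn γ (Icc 0 1 ∩ Icc x y) ≤ L₀ * ENNReal.ofReal (y - x) := by
        intro x hx y hy hxy
        have h1 : eVariationOn (γ ∘ id) (Icc 0 1 ∩ Icc x y) ≤ (L₀.toNNReal : ℝ≥0∞) *
            eVariationOn id (Icc 0 1 ∩ Icc x y) :=
          hγlip.comp_eVariationOn_le (fun t ht => ht.1)
        rw [Function.comp_id] at h1
        have h2 : eVariationOn (id : ℝ → ℝ) (Icc 0 1 ∩ Icc x y) ≤ ENNReal.ofReal (y - x) := by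
          have h3 := MonotoneOn.eVariationOn_le (f := (id : ℝ → ℝ)) (s := Icc (0:ℝ) 1)
            (fun a _ b _ h => h) hx hy
          simpa using h3
        calc eVariationOn γ (Icc 0 1 ∩ Icc x y)
            ≤ (L₀.toNNReal : ℝ≥0∞) * ENNReal.ofReal (y - x) :=
              le_trans h1 (mul_le_mul_right h2 _)
          _ = L₀ * ENNReal.ofReal (y - x) := by rw [ENNReal.coe_toNNReal hL₀top]
      have keyσ : ∀ x ∈ Icc (0:ℝ) 1, ∀ y ∈ Icc (0:ℝ) 1, x ≤ y →
          variationOnFromTo γ (Icc 0 1) x y ≤ L₀.toReal * (y - x) := by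
        intro x hx y hy hxy
        rw [variationOnFromTo.eq_of_le γ _ hxy]
        have h4 := ENNReal.toReal_mono (ENNReal.mul_ne_top hL₀top ENNReal.ofReal_ne_top)
          (hvar x hx y hy hxy)
        rwa [ENNReal.toReal_mul, ENNReal.toReal_ofReal (by linarith)] at h4
      have hσlip : LipschitzOnWith L₀.toNNReal (variationOnFromTo γ (Icc 0 1) 0) (Icc 0 1) := by
        have keyσ' : ∀ x ∈ Icc (0:ℝ) 1, ∀ y ∈ Icc (0:ℝ) 1, x ≤ y →
            edist (variationOnFromTo γ (Icc 0 1) 0 x) (variationOnFromTo γ (Icc 0 1) 0 y)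
              ≤ (L₀.toNNReal : ℝ≥0∞) * edist x y := by
          intro x hx y hy hxy
          have hadd : variationOnFromTo γ (Icc 0 1) 0 x + variationOnFromTo γ (Icc 0 1) x y
              = variationOnFromTo γ (Icc 0 1) 0 y := variationOnFromTo.add hbv h0s hx hy
          have hnn : 0 ≤ variationOnFromTo γ (Icc 0 1) x y :=
            variationOnFromTo.nonneg_of_le _ _ hxy
          have hk := keyσ x hx y hy hxy
          rw [edist_dist, edist_dist, Real.dist_eq, Real.dist_eq,
            abs_of_nonpos (by linarith), abs_of_nonpos (by linarith), neg_sub, neg_sub,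
            ← ENNReal.ofReal_toReal (a := (L₀.toNNReal : ℝ≥0∞)) ENNReal.coe_ne_top,
            ← ENNReal.ofReal_mul ENNReal.toReal_nonneg]
          refine ENNReal.ofReal_le_ofReal ?_
          have hco : ((L₀.toNNReal : ℝ≥0∞)).toReal = L₀.toReal := by
            rw [ENNReal.coe_toNNReal hL₀top]
          rw [hco]
          linarith
        intro x hx y hy
        rcases le_total x y with hxy | hxy
        · exact keyσ' x hx y hy hxy
        · rw [edist_comm, edist_comm x y]
          exact keyσ' y hy x hx hxy
      have hσmono : MonotoneOn (variationOnFromTo γ (Icc 0 1) 0) (Icc 0 1) :=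
        variationOnFromTo.monotoneOn hbv h0s
      have him' : variationOnFromTo γ (Icc 0 1) 0 '' Icc (0:ℝ) 1
          = Icc 0 (curveLen γ).toReal := aux_var_image hγc hfin
      have hFc : ContinuousOn (fun s => ρ (naturalParameterization γ (Icc 0 1) 0 s))
          (Icc 0 (curveLen γ).toReal) := hρcont.comp_continuousOn hnatc
      have hcore := aux_pushforward zero_le_one hσmono hσlip him' hFc
      have hcongr : ∫⁻ t in Icc (0:ℝ) 1,
          ρ (naturalParameterization γ (Icc 0 1) 0 (variationOnFromTo γ (Icc 0 1) 0 t))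
          = ∫⁻ t in Icc (0:ℝ) 1, ρ (γ t) := by
        refine setLIntegral_congr_fun measurableSet_Icc (fun t ht => ?_)
        rw [aux_nat_eq hfin ht]
      rw [hcongr] at hcore
      calc (∫⁻ s in Icc (0:ℝ) (curveLen γ).toReal,
            ρ (naturalParameterization γ (Icc 0 1) 0 s))
          ≤ (L₀.toNNReal : ℝ≥0∞) * ∫⁻ t in Icc (0:ℝ) 1, ρ (γ t) := hcore
        _ = L₀ * ∫⁻ t in Icc (0:ℝ) 1, ρ (γ t) := by rw [ENNReal.coe_toNNReal hL₀top]
        _ ≤ _ := hprod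
end

section
/- Let X be a metric space and γ:[0,1]→X an L-Lipschitz curve. If g:X→[0,∞] is lower semicontinuous, then ∫_γ g ds ≤ ∫_0^1 g(γ(t))·L dt. -/
open MeasureTheory Metric Set ENNReal NNReal Filter

/-- path integral of a lower semicontinuous function along an
`L`-Lipschitz curve is at most `∫₀¹ g(γ(t))·L dt`. -/
theorem stmt2 {X : Type*} [MetricSpace X]
    (γ : ℝ → X) (L : ℝ≥0)
    (hγ : IsCurve γ) (hlip : LipschitzOnWith L γ (Set.Icc 0 1))
    (g : X → ℝ≥0∞) (hg : LowerSemicontinuous g) :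
    pathIntegral g γ ≤ ∫⁻ t in Set.Icc (0:ℝ) 1, g (γ t) * (L : ℝ≥0∞) := by
  classical
  set I : Set ℝ := Set.Icc (0:ℝ) 1 with hI
  have h0I : (0:ℝ) ∈ I := ⟨le_refl 0, zero_le_one⟩
  have h1I : (1:ℝ) ∈ I := ⟨zero_le_one, le_refl 1⟩
  have hbv : LocallyBoundedVariationOn γ I := hlip.locallyBoundedVariationOn
  set V : ℝ → ℝ := variationOnFromTo γ I 0 with hV
  set ℓ : ℝ := (curveLen γ).toReal with hℓ
  -- key variation bound
  have key : ∀ x ∈ I, ∀ y ∈ I, x ≤ y →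
      eVariationOn γ (I ∩ Set.Icc x y) ≤ (L : ℝ≥0∞) * ENNReal.ofReal (y - x) := by
    intro x hx y hy _
    have h1 : eVariationOn (γ ∘ id) (I ∩ Set.Icc x y) ≤
        (L : ℝ≥0∞) * eVariationOn id (I ∩ Set.Icc x y) :=
      hlip.comp_eVariationOn_le (fun z hz => hz.1)
    have h2 : eVariationOn (id : ℝ → ℝ) (I ∩ Set.Icc x y) ≤ ENNReal.ofReal (y - x) :=
      (monotone_id.monotoneOn I).eVariationOn_le hx hy
    exact (le_of_eq (by rfl)).trans (h1.trans (mul_le_mul_right h2 _))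
  have hVmono : MonotoneOn V I := variationOnFromTo.monotoneOn hbv h0I
  have hVsub : ∀ x ∈ I, ∀ y ∈ I, x ≤ y → V y - V x ≤ (L : ℝ) * (y - x) := by
    intro x hx y hy hxy
    have hadd := variationOnFromTo.add hbv h0I hx hy
    have h1 : V y - V x = variationOnFromTo γ I x y := by
      rw [hV, ← hadd]; ring
    rw [h1, variationOnFromTo.eq_of_le γ I hxy]
    have := key x hx y hy hxy
    have h2 := ENNReal.toReal_mono
      (by finiteness : (L : ℝ≥0∞) * ENNReal.ofReal (y - x) ≠ ⊤) this
    rwa [ENNReal.toReal_mul, ENNReal.coe_toReal,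
      ENNReal.toReal_ofReal (by linarith)] at h2
  have hVlip : LipschitzOnWith L V I := by
    apply LipschitzOnWith.of_dist_le_mul
    intro x hx y hy
    rcases le_total x y with hxy | hyx
    · rw [Real.dist_eq, Real.dist_eq, abs_of_nonpos (by
        have := hVmono hx hy hxy; linarith), abs_of_nonpos (by linarith)]
      have := hVsub x hx y hy hxy; linarith
    · rw [Real.dist_eq, Real.dist_eq, abs_of_nonneg (by
        have := hVmono hy hx hyx; linarith), abs_of_nonneg (by linarith)]
      have := hVsub y hy x hx hyx; linarith
  set W : ℝ → ℝ := fun t => V ((Set.projIcc (0:ℝ) 1 zero_le_one t : ℝ)) with hW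
  have hWlip : LipschitzWith L W := by
    have h1 : LipschitzWith L (I.restrict V) := lipschitzOnWith_iff_restrict.mp hVlip
    have h2 : LipschitzWith 1 (Set.projIcc (0:ℝ) 1 zero_le_one) := LipschitzWith.projIcc _
    have := h1.comp h2
    rw [mul_one] at this
    exact this
  have hWeq : ∀ t ∈ I, W t = V t := by
    intro t ht
    simp only [hW, Set.projIcc_of_mem zero_le_one ht]
  have hW0 : W 0 = 0 := by
    rw [hWeq 0 h0I, hV, variationOnFromTo.self]
  have hW1 : W 1 = ℓ := by
    rw [hWeq 1 h1I, hV, variationOnFromTo.eq_of_le γ I zero_le_one, hℓ]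
    congr 1
    rw [Set.inter_self]
    rfl
  set μ' : Measure ℝ := (L : ℝ≥0∞) • (volume.restrict I) with hμ'
  have hmeasle : volume.restrict (Set.Icc 0 ℓ) ≤ Measure.map W μ' := by
    rw [MeasureTheory.Measure.le_iff]
    intro A hA
    rw [Measure.map_apply hWlip.continuous.measurable hA, Measure.restrict_apply hA,
      hμ', Measure.smul_apply, Measure.restrict_apply (hWlip.continuous.measurable hA),
      smul_eq_mul]
    have hsub : A ∩ Set.Icc 0 ℓ ⊆ W '' (W ⁻¹' A ∩ I) := by
      rintro x ⟨hxA, hxI⟩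
      have hx' : x ∈ Set.Icc (W 0) (W 1) := by rw [hW0, hW1]; exact hxI
      obtain ⟨t, htI, hWt⟩ :=
        intermediate_value_Icc zero_le_one hWlip.continuous.continuousOn hx'
      exact ⟨t, ⟨by simp [Set.mem_preimage, hWt, hxA], htI⟩, hWt⟩
    calc volume (A ∩ Set.Icc 0 ℓ) ≤ volume (W '' (W ⁻¹' A ∩ I)) := measure_mono hsub
      _ = μH[1] (W '' (W ⁻¹' A ∩ I)) := by rw [MeasureTheory.hausdorffMeasure_real]
      _ ≤ (L : ℝ≥0∞) ^ (1:ℝ) * μH[1] (W ⁻¹' A ∩ I) :=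
          hWlip.hausdorffMeasure_image_le zero_le_one _
      _ = (L : ℝ≥0∞) * volume (W ⁻¹' A ∩ I) := by
          rw [MeasureTheory.hausdorffMeasure_real, ENNReal.rpow_one]
  calc pathIntegral g γ
      = ∫⁻ x in Set.Icc 0 ℓ, g (naturalParameterization γ I 0 x) := rfl
    _ ≤ ∫⁻ x, g (naturalParameterization γ I 0 x) ∂(Measure.map W μ') :=
        lintegral_mono' hmeasle (le_refl _)
    _ ≤ ∫⁻ t, g (naturalParameterization γ I 0 (W t)) ∂μ' :=
        lintegral_map_le _ W
    _ = (L : ℝ≥0∞) * ∫⁻ t in I, g (naturalParameterization γ I 0 (W t)) := by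
        rw [hμ', lintegral_smul_measure, smul_eq_mul]
    _ = (L : ℝ≥0∞) * ∫⁻ t in I, g (γ t) := by
        congr 1
        refine lintegral_congr_ae ((ae_restrict_iff' measurableSet_Icc).2
          (Filter.Eventually.of_forall fun t ht => ?_))
        have h1 : naturalParameterization γ I 0 (W t) = γ t := by
          rw [hWeq t ht]
          exact edist_eq_zero.mp (edist_naturalParameterization_eq_zero hbv h0I ht)
        simp only [h1]
    _ = ∫⁻ t in I, g (γ t) * (L : ℝ≥0∞) := by
        rw [lintegral_mul_const' (L : ℝ≥0∞) _ ENNReal.coe_ne_top, mul_comm]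
end

section
/- Let X be a metric space, δ, M > 0, E ⊂ X a non-empty set, g:X→[0,∞) continuous, and h:E→ℝ bounded. Define f(y) = min( inf_P { h(p_0) + ∑_{k=0}^{n-1} g(p_k)d(p_k,p_{k+1}) }, M ), where the infimum is over all discrete paths P = (p_0,…,p_n) with p_0 ∈ E, p_n = y, and Mesh(P) ≤ δ. Then f is locally Lipschitz and g is an upper gradient of f. -/
open MeasureTheory Metric Set ENNReal NNReal Filter

section auxlem
variable {X : Type*} [MetricSpace X]

section lip
variable {E : Set X} {delta M : ℝ} {g h : X → ℝ} {C : ℝ}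

lemma dSet_bddBelow (hg0 : ∀ x, 0 ≤ g x) (hb : ∀ x ∈ E, |h x| ≤ C) (y : X) :
    BddBelow (insert M {v : ℝ | ∃ (n : ℕ) (p : ℕ → X), dAdm E delta y n p ∧ v = dPathVal g h n p}) := by
  refine ⟨min M (-C), ?_⟩
  rintro v (rfl | ⟨n, p, hadm, rfl⟩)
  · exact min_le_left _ _
  · refine le_trans (min_le_right _ _) ?_
    have h1 : -C ≤ h (p 0) := neg_le_of_abs_le (hb _ hadm.1)
    have h2 : 0 ≤ ∑ k ∈ Finset.range n, g (p k) * dist (p k) (p (k+1)) :=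
      Finset.sum_nonneg fun k _ => mul_nonneg (hg0 _) dist_nonneg
    unfold dPathVal; linarith

lemma dInfFun_le_key (hg0 : ∀ x, 0 ≤ g x) (hb : ∀ x ∈ E, |h x| ≤ C)
    {y z : X} (hyz : dist y z ≤ delta) :
    dInfFun E delta M g h z ≤ dInfFun E delta M g h y + g y * dist y z := by
  have hbddz := dSet_bddBelow (E := E) (delta := delta) (M := M) hg0 hb z
  have hbddy := dSet_bddBelow (E := E) (delta := delta) (M := M) hg0 hb y
  have hgd : 0 ≤ g y * dist y z := mul_nonneg (hg0 _) dist_nonneg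
  have key : ∀ v ∈ insert M {v : ℝ | ∃ (n : ℕ) (p : ℕ → X),
      dAdm E delta y n p ∧ v = dPathVal g h n p},
      dInfFun E delta M g h z ≤ v + g y * dist y z := by
    rintro v (rfl | ⟨n, p, hadm, rfl⟩)
    · exact le_trans (csInf_le hbddz (mem_insert _ _)) (le_add_of_nonneg_right hgd)
    · by_cases hz : ∃ k ≤ n, p k = z
      · obtain ⟨k, hk, hpk⟩ := hz
        have hadm' : dAdm E delta z k p :=
          ⟨hadm.1, hpk, fun a ha b hb' => hadm.2.2.1 a (ha.trans hk) b (hb'.trans hk),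
            fun a ha => hadm.2.2.2 a (lt_of_lt_of_le ha hk)⟩
        have h1 : dInfFun E delta M g h z ≤ dPathVal g h k p :=
          csInf_le hbddz (mem_insert_of_mem _ ⟨k, p, hadm', rfl⟩)
        have h2 : dPathVal g h k p ≤ dPathVal g h n p := by
          unfold dPathVal
          exact add_le_add_right (Finset.sum_le_sum_of_subset_of_nonneg
            (Finset.range_subset_range.2 hk) (fun i _ _ => mul_nonneg (hg0 _) dist_nonneg)) _
        exact le_trans h1 (le_trans h2 (le_add_of_nonneg_right hgd))
      · push_neg at hz
        set q : ℕ → X := fun k => if k ≤ n then p k else z with hq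
        have hq0 : q 0 = p 0 := if_pos (Nat.zero_le n)
        have hqn1 : q (n+1) = z := if_neg (by omega)
        have hqk : ∀ k ≤ n, q k = p k := fun k hk => if_pos hk
        have hadm' : dAdm E delta z (n+1) q := by
          refine ⟨hq0 ▸ hadm.1, hqn1, ?_, ?_⟩
          · intro a ha b hb' hab
            rcases Nat.lt_succ_iff_lt_or_eq.mp (Nat.lt_succ_of_le ha) with ha' | rfl <;>
              rcases Nat.lt_succ_iff_lt_or_eq.mp (Nat.lt_succ_of_le hb') with hb'' | rfl
            · exact hadm.2.2.1 a (Nat.lt_succ_iff.mp ha') b (Nat.lt_succ_iff.mp hb'') (by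
                rwa [hqk a (Nat.lt_succ_iff.mp ha'), hqk b (Nat.lt_succ_iff.mp hb'')] at hab)
            · exact absurd ((hqk a (Nat.lt_succ_iff.mp ha')) ▸ hqn1 ▸ hab)
                (hz a (Nat.lt_succ_iff.mp ha'))
            · exact absurd ((hqk b (Nat.lt_succ_iff.mp hb'')) ▸ hqn1 ▸ hab.symm)
                (hz b (Nat.lt_succ_iff.mp hb''))
            · rfl
          · intro k hk
            rcases Nat.lt_succ_iff_lt_or_eq.mp hk with hk' | rfl
            · rw [hqk k (by omega), hqk (k+1) (by omega)]
              exact hadm.2.2.2 k hk'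
            · rw [hqk k le_rfl, hqn1, hadm.2.1]
              exact hyz
        have hval : dPathVal g h (n+1) q = dPathVal g h n p + g y * dist y z := by
          unfold dPathVal
          rw [Finset.sum_range_succ, hq0, hqk n le_rfl, hqn1, hadm.2.1]
          have : ∑ k ∈ Finset.range n, g (q k) * dist (q k) (q (k+1)) =
              ∑ k ∈ Finset.range n, g (p k) * dist (p k) (p (k+1)) := by
            refine Finset.sum_congr rfl fun k hk => ?_
            rw [Finset.mem_range] at hk
            rw [hqk k (by omega), hqk (k+1) (by omega)]
          rw [this]; ring
        calc dInfFun E delta M g h z ≤ dPathVal g h (n+1) q :=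
              csInf_le hbddz (mem_insert_of_mem _ ⟨n+1, q, hadm', rfl⟩)
          _ = dPathVal g h n p + g y * dist y z := hval
  have h1 : dInfFun E delta M g h z - g y * dist y z ≤ dInfFun E delta M g h y := by
    refine le_csInf ⟨M, mem_insert _ _⟩ fun v hv => ?_
    exact sub_le_iff_le_add.2 (key v hv)
  linarith

lemma dInfFun_abs_le (hg0 : ∀ x, 0 ≤ g x) (hb : ∀ x ∈ E, |h x| ≤ C)
    {y z : X} (hyz : dist y z ≤ delta) :
    |dInfFun E delta M g h y - dInfFun E delta M g h z| ≤ max (g y) (g z) * dist y z := by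
  rw [abs_sub_le_iff]
  constructor
  · have := dInfFun_le_key (M := M) hg0 hb (y := z) (z := y) (dist_comm y z ▸ hyz)
    have hle : g z * dist z y ≤ max (g y) (g z) * dist y z := by
      rw [dist_comm z y]
      exact mul_le_mul_of_nonneg_right (le_max_right _ _) dist_nonneg
    linarith
  · have := dInfFun_le_key (M := M) hg0 hb (y := y) (z := z) hyz
    have hle : g y * dist y z ≤ max (g y) (g z) * dist y z :=
      mul_le_mul_of_nonneg_right (le_max_left _ _) dist_nonneg
    linarith

lemma dInfFun_locallyLipschitz (hdelta : 0 < delta) (hgc : Continuous g)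
    (hg0 : ∀ x, 0 ≤ g x) (hb : ∀ x ∈ E, |h x| ≤ C) :
    LocallyLipschitz (dInfFun E delta M g h) := by
  intro x
  have hopen : IsOpen {y : X | g y < g x + 1} := isOpen_lt hgc continuous_const
  obtain ⟨r1, hr1, hball⟩ := Metric.isOpen_iff.mp hopen x (by simp)
  refine ⟨Real.toNNReal (g x + 1), ball x (min r1 (delta/2)), ?_, ?_⟩
  · exact Metric.ball_mem_nhds x (lt_min hr1 (by linarith))
  · refine LipschitzOnWith.of_dist_le_mul fun y hy z hz => ?_
    have hyz : dist y z ≤ delta := by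
      have h1 := mem_ball.mp hy
      have h2 := mem_ball.mp hz
      have h3 := dist_triangle y x z
      rw [dist_comm z x] at h2
      have h4 := min_le_right r1 (delta/2)
      linarith
    have habs := dInfFun_abs_le (M := M) hg0 hb hyz
    have hgy : g y < g x + 1 := hball (lt_of_lt_of_le (mem_ball.mp hy) (min_le_left _ _))
    have hgz : g z < g x + 1 := hball (lt_of_lt_of_le (mem_ball.mp hz) (min_le_left _ _))
    have hcoe : (Real.toNNReal (g x + 1) : ℝ) = g x + 1 :=
      Real.coe_toNNReal _ (by have := hg0 x; linarith)
    rw [Real.dist_eq, hcoe]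
    calc |dInfFun E delta M g h y - dInfFun E delta M g h z|
        ≤ max (g y) (g z) * dist y z := habs
      _ ≤ (g x + 1) * dist y z :=
          mul_le_mul_of_nonneg_right (max_le hgy.le hgz.le) dist_nonneg

end lip


section var
variable {γ : ℝ → X}

lemma evar_small_right (hγ : ContinuousOn γ (Icc (0:ℝ) 1))
    (hbv : eVariationOn γ (Icc (0:ℝ) 1) ≠ ⊤)
    {t : ℝ} (ht : t ∈ Icc (0:ℝ) 1) (ht1 : t < 1) {ε : ℝ} (hε : 0 < ε) :
    ∃ u ∈ Icc (0:ℝ) 1, t < u ∧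
      eVariationOn γ (Icc (0:ℝ) 1 ∩ Icc t u) ≤ ENNReal.ofReal ε := by
  set V := eVariationOn γ (Icc (0:ℝ) 1 ∩ Icc t 1) with hV
  have hVne : V ≠ ⊤ := by
    refine ne_top_of_le_ne_top hbv (eVariationOn.mono γ inter_subset_left)
  by_cases hVsmall : V ≤ ENNReal.ofReal ε
  · exact ⟨1, by constructor <;> norm_num, ht1, hVsmall⟩
  push_neg at hVsmall
  have hV0 : V ≠ 0 := by
    intro h0; rw [h0] at hVsmall; exact (not_lt_of_ge zero_le) hVsmall
  have hsub : V - ENNReal.ofReal (ε/2) < V :=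
    ENNReal.sub_lt_self hVne hV0 (by simp [ENNReal.ofReal_pos]; linarith)
  have hlt : V - ENNReal.ofReal (ε/2) < eVariationOn γ (Icc (0:ℝ) 1 ∩ Icc t 1) := hsub
  rw [eVariationOn, lt_iSup_iff] at hlt
  obtain ⟨⟨n, u, hu, us⟩, hsum⟩ := hlt
  -- continuity at t within the set
  set ε' : ℝ := ε / (4 * (n + 1)) with hε'def
  have hε' : 0 < ε' := by positivity
  obtain ⟨d, hd, hdball⟩ := Metric.continuousWithinAt_iff.mp (hγ t ht) ε' hε'
  set w : ℝ := min (t + d/2) 1 with hwdef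
  have htw : t < w := lt_min (by linarith) ht1
  have hwmem : w ∈ Icc (0:ℝ) 1 := ⟨le_min (by linarith [ht.1]) zero_le_one, min_le_right _ _⟩
  have hclose : ∀ x ∈ Icc (0:ℝ) 1 ∩ Icc t w,
      edist (γ x) (γ t) ≤ ENNReal.ofReal ε' := by
    rintro x ⟨hx01, hxt, hxw⟩
    have hdx : dist x t < d := by
      rw [Real.dist_eq, abs_of_nonneg (by linarith)]
      have : x ≤ t + d/2 := le_trans hxw (min_le_left _ _)
      linarith
    have := hdball hx01 hdx
    rw [edist_dist]
    exact ENNReal.ofReal_le_ofReal this.le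
  -- modified partition
  set v : ℕ → ℝ := fun i => max (u i) w with hvdef
  have hvmono : Monotone v := fun i j hij => max_le_max (hu hij) le_rfl
  have hvmem : ∀ i, v i ∈ Icc (0:ℝ) 1 ∩ Icc w 1 := by
    intro i
    obtain ⟨⟨h01a, h01b⟩, hta, h1a⟩ := us i
    exact ⟨⟨le_trans hwmem.1 (le_max_right _ _), max_le h01b hwmem.2⟩,
      le_max_right _ _, max_le h1a hwmem.2⟩
  have humem : ∀ i, u i ≤ w → u i ∈ Icc (0:ℝ) 1 ∩ Icc t w := by
    intro i hiw
    obtain ⟨h01, hta, _⟩ := us i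
    exact ⟨h01, hta, hiw⟩
  -- per-term comparison
  have hterm : ∀ i, edist (γ (u (i+1))) (γ (u i)) ≤
      edist (γ (v (i+1))) (γ (v i)) + (ENNReal.ofReal ε' + ENNReal.ofReal ε') := by
    intro i
    rcases le_or_gt w (u i) with hw | hw
    · have h1 : v i = u i := max_eq_left hw
      have h2 : v (i+1) = u (i+1) := max_eq_left (le_trans hw (hu (Nat.le_succ i)))
      rw [h1, h2]
      exact le_add_of_nonneg_right zero_le
    · rcases le_or_gt (u (i+1)) w with hw2 | hw2
      · -- both below w
        have hb1 := hclose _ (humem i hw.le)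
        have hb2 := hclose _ (humem (i+1) hw2)
        calc edist (γ (u (i+1))) (γ (u i))
            ≤ edist (γ (u (i+1))) (γ t) + edist (γ t) (γ (u i)) := edist_triangle _ _ _
          _ ≤ ENNReal.ofReal ε' + ENNReal.ofReal ε' := by
              refine add_le_add hb2 ?_
              rw [edist_comm]; exact hb1
          _ ≤ _ := le_add_of_nonneg_left zero_le
      · -- u i < w < u (i+1)
        have h1 : v i = w := max_eq_right hw.le
        have h2 : v (i+1) = u (i+1) := max_eq_left hw2.le
        have hb1 := hclose _ (humem i hw.le)
        have hwt : edist (γ w) (γ t) ≤ ENNReal.ofReal ε' :=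
          hclose _ ⟨hwmem, htw.le, le_rfl⟩
        rw [h1, h2]
        calc edist (γ (u (i+1))) (γ (u i))
            ≤ edist (γ (u (i+1))) (γ w) + edist (γ w) (γ (u i)) := edist_triangle _ _ _
          _ ≤ edist (γ (u (i+1))) (γ w) + (edist (γ w) (γ t) + edist (γ t) (γ (u i))) := by
              gcongr; exact edist_triangle _ _ _
          _ ≤ edist (γ (u (i+1))) (γ w) + (ENNReal.ofReal ε' + ENNReal.ofReal ε') := by
              gcongr
              rw [edist_comm]; exact hb1
  -- sum comparison
  have hsum2 : (∑ i ∈ Finset.range n, edist (γ (u (i+1))) (γ (u i))) ≤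
      (∑ i ∈ Finset.range n, edist (γ (v (i+1))) (γ (v i))) +
        n * (ENNReal.ofReal ε' + ENNReal.ofReal ε') := by
    calc (∑ i ∈ Finset.range n, edist (γ (u (i+1))) (γ (u i)))
        ≤ ∑ i ∈ Finset.range n,
            (edist (γ (v (i+1))) (γ (v i)) + (ENNReal.ofReal ε' + ENNReal.ofReal ε')) :=
          Finset.sum_le_sum fun i _ => hterm i
      _ = _ := by rw [Finset.sum_add_distrib, Finset.sum_const, Finset.card_range,
            nsmul_eq_mul]
  have hvsum : (∑ i ∈ Finset.range n, edist (γ (v (i+1))) (γ (v i))) ≤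
      eVariationOn γ (Icc (0:ℝ) 1 ∩ Icc w 1) :=
    eVariationOn.sum_le (n := n) hvmono hvmem
  have herr : (n : ℝ≥0∞) * (ENNReal.ofReal ε' + ENNReal.ofReal ε') ≤ ENNReal.ofReal (ε/2) := by
    rw [← ENNReal.ofReal_add hε'.le hε'.le, ← ENNReal.ofReal_natCast n,
      ← ENNReal.ofReal_mul (Nat.cast_nonneg n)]
    refine ENNReal.ofReal_le_ofReal ?_
    rw [hε'def]
    have hn1 : (0:ℝ) < (n:ℝ) + 1 := by positivity
    have hA : (0:ℝ) ≤ ε / (4 * ((n:ℝ) + 1)) := by positivity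
    have heq : ((n:ℝ)+1) * (ε / (4 * ((n:ℝ) + 1)) + ε / (4 * ((n:ℝ) + 1))) = ε/2 := by
      field_simp; ring
    nlinarith [hA, Nat.cast_nonneg (α := ℝ) n]
  have hBne : eVariationOn γ (Icc (0:ℝ) 1 ∩ Icc w 1) ≠ ⊤ :=
    ne_top_of_le_ne_top hbv (eVariationOn.mono γ inter_subset_left)
  have hfinal : V ≤ eVariationOn γ (Icc (0:ℝ) 1 ∩ Icc w 1) + ENNReal.ofReal ε := by
    have h1 : V ≤ (∑ i ∈ Finset.range n, edist (γ (u (i+1))) (γ (u i)))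
        + ENNReal.ofReal (ε/2) := tsub_le_iff_right.mp hsum.le
    calc V ≤ (∑ i ∈ Finset.range n, edist (γ (u (i+1))) (γ (u i)))
          + ENNReal.ofReal (ε/2) := h1
      _ ≤ ((∑ i ∈ Finset.range n, edist (γ (v (i+1))) (γ (v i))) +
            n * (ENNReal.ofReal ε' + ENNReal.ofReal ε')) + ENNReal.ofReal (ε/2) :=
          add_le_add_left hsum2 _
      _ ≤ (eVariationOn γ (Icc (0:ℝ) 1 ∩ Icc w 1) + ENNReal.ofReal (ε/2))
            + ENNReal.ofReal (ε/2) := by gcongr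
      _ = eVariationOn γ (Icc (0:ℝ) 1 ∩ Icc w 1) + ENNReal.ofReal ε := by
          rw [add_assoc, ← ENNReal.ofReal_add (by linarith) (by linarith), add_halves]
  have hadd := eVariationOn.Icc_add_Icc γ (le_of_lt htw) hwmem.2 hwmem
  refine ⟨w, hwmem, htw, ?_⟩
  have hle2 : eVariationOn γ (Icc (0:ℝ) 1 ∩ Icc t w) + eVariationOn γ (Icc (0:ℝ) 1 ∩ Icc w 1)
      ≤ ENNReal.ofReal ε + eVariationOn γ (Icc (0:ℝ) 1 ∩ Icc w 1) := by
    rw [hadd]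
    exact le_trans hfinal (le_of_eq (add_comm _ _))
  exact (ENNReal.add_le_add_iff_right hBne).mp hle2

lemma evar_small_left (hγ : ContinuousOn γ (Icc (0:ℝ) 1))
    (hbv : eVariationOn γ (Icc (0:ℝ) 1) ≠ ⊤)
    {t : ℝ} (ht : t ∈ Icc (0:ℝ) 1) (ht0 : 0 < t) {ε : ℝ} (hε : 0 < ε) :
    ∃ u ∈ Icc (0:ℝ) 1, u < t ∧
      eVariationOn γ (Icc (0:ℝ) 1 ∩ Icc u t) ≤ ENNReal.ofReal ε := by
  set V := eVariationOn γ (Icc (0:ℝ) 1 ∩ Icc 0 t) with hV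
  have hVne : V ≠ ⊤ := ne_top_of_le_ne_top hbv (eVariationOn.mono γ inter_subset_left)
  by_cases hVsmall : V ≤ ENNReal.ofReal ε
  · exact ⟨0, by constructor <;> norm_num, ht0, hVsmall⟩
  push_neg at hVsmall
  have hV0 : V ≠ 0 := by
    intro h0; rw [h0] at hVsmall; exact (not_lt_of_ge zero_le) hVsmall
  have hsub : V - ENNReal.ofReal (ε/2) < V :=
    ENNReal.sub_lt_self hVne hV0 (by simp [ENNReal.ofReal_pos]; linarith)
  have hlt : V - ENNReal.ofReal (ε/2) < eVariationOn γ (Icc (0:ℝ) 1 ∩ Icc 0 t) := hsub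
  rw [eVariationOn, lt_iSup_iff] at hlt
  obtain ⟨⟨n, u, hu, us⟩, hsum⟩ := hlt
  set ε' : ℝ := ε / (4 * (n + 1)) with hε'def
  have hε' : 0 < ε' := by positivity
  obtain ⟨d, hd, hdball⟩ := Metric.continuousWithinAt_iff.mp (hγ t ht) ε' hε'
  set w : ℝ := max (t - d/2) 0 with hwdef
  have htw : w < t := max_lt (by linarith) ht0
  have hwmem : w ∈ Icc (0:ℝ) 1 := ⟨le_max_right _ _, max_le (by linarith [ht.2]) zero_le_one⟩
  have hclose : ∀ x ∈ Icc (0:ℝ) 1 ∩ Icc w t,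
      edist (γ x) (γ t) ≤ ENNReal.ofReal ε' := by
    rintro x ⟨hx01, hxw, hxt⟩
    have hdx : dist x t < d := by
      rw [Real.dist_eq, abs_of_nonpos (by linarith)]
      have : t - d/2 ≤ x := le_trans (le_max_left _ _) hxw
      linarith
    have := hdball hx01 hdx
    rw [edist_dist]
    exact ENNReal.ofReal_le_ofReal this.le
  set v : ℕ → ℝ := fun i => min (u i) w with hvdef
  have hvmono : Monotone v := fun i j hij => min_le_min (hu hij) le_rfl
  have hvmem : ∀ i, v i ∈ Icc (0:ℝ) 1 ∩ Icc 0 w := by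
    intro i
    obtain ⟨⟨h01a, h01b⟩, h0a, hta⟩ := us i
    exact ⟨⟨le_min h01a hwmem.1, min_le_of_right_le hwmem.2⟩,
      le_min h0a hwmem.1, min_le_right _ _⟩
  have humem : ∀ i, w ≤ u i → u i ∈ Icc (0:ℝ) 1 ∩ Icc w t := by
    intro i hiw
    obtain ⟨h01, _, hta⟩ := us i
    exact ⟨h01, hiw, hta⟩
  have hterm : ∀ i, edist (γ (u (i+1))) (γ (u i)) ≤
      edist (γ (v (i+1))) (γ (v i)) + (ENNReal.ofReal ε' + ENNReal.ofReal ε') := by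
    intro i
    rcases le_or_gt (u (i+1)) w with hw | hw
    · have h2 : v (i+1) = u (i+1) := min_eq_left hw
      have h1 : v i = u i := min_eq_left (le_trans (hu (Nat.le_succ i)) hw)
      rw [h1, h2]
      exact le_add_of_nonneg_right zero_le
    · rcases le_or_gt w (u i) with hw2 | hw2
      · -- both in [w, t]
        have hb1 := hclose _ (humem i hw2)
        have hb2 := hclose _ (humem (i+1) hw.le)
        calc edist (γ (u (i+1))) (γ (u i))
            ≤ edist (γ (u (i+1))) (γ t) + edist (γ t) (γ (u i)) := edist_triangle _ _ _
          _ ≤ ENNReal.ofReal ε' + ENNReal.ofReal ε' := by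
              refine add_le_add hb2 ?_
              rw [edist_comm]; exact hb1
          _ ≤ _ := le_add_of_nonneg_left zero_le
      · -- u i < w < u (i+1)
        have h2 : v (i+1) = w := min_eq_right hw.le
        have h1 : v i = u i := min_eq_left hw2.le
        have hb2 := hclose _ (humem (i+1) hw.le)
        have hwt : edist (γ w) (γ t) ≤ ENNReal.ofReal ε' :=
          hclose _ ⟨hwmem, le_rfl, htw.le⟩
        rw [h1, h2]
        calc edist (γ (u (i+1))) (γ (u i))
            ≤ edist (γ (u (i+1))) (γ w) + edist (γ w) (γ (u i)) := edist_triangle _ _ _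
          _ ≤ (edist (γ (u (i+1))) (γ t) + edist (γ t) (γ w)) + edist (γ w) (γ (u i)) := by
              gcongr; exact edist_triangle _ _ _
          _ ≤ (ENNReal.ofReal ε' + ENNReal.ofReal ε') + edist (γ w) (γ (u i)) := by
              gcongr
              rw [edist_comm]; exact hwt
          _ = edist (γ w) (γ (u i)) + (ENNReal.ofReal ε' + ENNReal.ofReal ε') := add_comm _ _
  have hsum2 : (∑ i ∈ Finset.range n, edist (γ (u (i+1))) (γ (u i))) ≤
      (∑ i ∈ Finset.range n, edist (γ (v (i+1))) (γ (v i))) +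
        n * (ENNReal.ofReal ε' + ENNReal.ofReal ε') := by
    calc (∑ i ∈ Finset.range n, edist (γ (u (i+1))) (γ (u i)))
        ≤ ∑ i ∈ Finset.range n,
            (edist (γ (v (i+1))) (γ (v i)) + (ENNReal.ofReal ε' + ENNReal.ofReal ε')) :=
          Finset.sum_le_sum fun i _ => hterm i
      _ = _ := by rw [Finset.sum_add_distrib, Finset.sum_const, Finset.card_range,
            nsmul_eq_mul]
  have hvsum : (∑ i ∈ Finset.range n, edist (γ (v (i+1))) (γ (v i))) ≤
      eVariationOn γ (Icc (0:ℝ) 1 ∩ Icc 0 w) :=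
    eVariationOn.sum_le (n := n) hvmono hvmem
  have herr : (n : ℝ≥0∞) * (ENNReal.ofReal ε' + ENNReal.ofReal ε') ≤ ENNReal.ofReal (ε/2) := by
    rw [← ENNReal.ofReal_add hε'.le hε'.le, ← ENNReal.ofReal_natCast n,
      ← ENNReal.ofReal_mul (Nat.cast_nonneg n)]
    refine ENNReal.ofReal_le_ofReal ?_
    rw [hε'def]
    have hn1 : (0:ℝ) < (n:ℝ) + 1 := by positivity
    have hA : (0:ℝ) ≤ ε / (4 * ((n:ℝ) + 1)) := by positivity
    have heq : ((n:ℝ)+1) * (ε / (4 * ((n:ℝ) + 1)) + ε / (4 * ((n:ℝ) + 1))) = ε/2 := by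
      field_simp; ring
    nlinarith [hA, Nat.cast_nonneg (α := ℝ) n]
  have hBne : eVariationOn γ (Icc (0:ℝ) 1 ∩ Icc 0 w) ≠ ⊤ :=
    ne_top_of_le_ne_top hbv (eVariationOn.mono γ inter_subset_left)
  have hfinal : V ≤ eVariationOn γ (Icc (0:ℝ) 1 ∩ Icc 0 w) + ENNReal.ofReal ε := by
    have h1 : V ≤ (∑ i ∈ Finset.range n, edist (γ (u (i+1))) (γ (u i)))
        + ENNReal.ofReal (ε/2) := tsub_le_iff_right.mp hsum.le
    calc V ≤ (∑ i ∈ Finset.range n, edist (γ (u (i+1))) (γ (u i)))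
          + ENNReal.ofReal (ε/2) := h1
      _ ≤ ((∑ i ∈ Finset.range n, edist (γ (v (i+1))) (γ (v i))) +
            n * (ENNReal.ofReal ε' + ENNReal.ofReal ε')) + ENNReal.ofReal (ε/2) :=
          add_le_add_left hsum2 _
      _ ≤ (eVariationOn γ (Icc (0:ℝ) 1 ∩ Icc 0 w) + ENNReal.ofReal (ε/2))
            + ENNReal.ofReal (ε/2) := by gcongr
      _ = eVariationOn γ (Icc (0:ℝ) 1 ∩ Icc 0 w) + ENNReal.ofReal ε := by
          rw [add_assoc, ← ENNReal.ofReal_add (by linarith) (by linarith), add_halves]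
  have hadd := eVariationOn.Icc_add_Icc γ hwmem.1 (le_of_lt htw) hwmem
  refine ⟨w, hwmem, htw, ?_⟩
  have hle2 : eVariationOn γ (Icc (0:ℝ) 1 ∩ Icc 0 w) + eVariationOn γ (Icc (0:ℝ) 1 ∩ Icc w t)
      ≤ eVariationOn γ (Icc (0:ℝ) 1 ∩ Icc 0 w) + ENNReal.ofReal ε := by
    rw [hadd]
    exact hfinal
  exact (ENNReal.add_le_add_iff_left hBne).mp hle2

lemma lbv_of_bv (hbv : eVariationOn γ (Icc (0:ℝ) 1) ≠ ⊤) :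
    LocallyBoundedVariationOn γ (Icc (0:ℝ) 1) :=
  fun _ _ _ _ => ne_top_of_le_ne_top hbv (eVariationOn.mono γ inter_subset_left)

lemma variation_sub (hbv : eVariationOn γ (Icc (0:ℝ) 1) ≠ ⊤)
    {a b : ℝ} (ha : a ∈ Icc (0:ℝ) 1) (hb : b ∈ Icc (0:ℝ) 1) (hab : a ≤ b) :
    variationOnFromTo γ (Icc (0:ℝ) 1) 0 b - variationOnFromTo γ (Icc (0:ℝ) 1) 0 a
      = (eVariationOn γ (Icc (0:ℝ) 1 ∩ Icc a b)).toReal := by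
  have h0 : (0:ℝ) ∈ Icc (0:ℝ) 1 := ⟨le_rfl, zero_le_one⟩
  have := variationOnFromTo.add (lbv_of_bv hbv) h0 ha hb
  rw [← variationOnFromTo.eq_of_le γ _ hab]
  linarith

lemma variation_continuousOn (hγ : ContinuousOn γ (Icc (0:ℝ) 1))
    (hbv : eVariationOn γ (Icc (0:ℝ) 1) ≠ ⊤) :
    ContinuousOn (variationOnFromTo γ (Icc (0:ℝ) 1) 0) (Icc (0:ℝ) 1) := by
  set v := variationOnFromTo γ (Icc (0:ℝ) 1) 0 with hvdef
  have h0 : (0:ℝ) ∈ Icc (0:ℝ) 1 := ⟨le_rfl, zero_le_one⟩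
  have hmono : MonotoneOn v (Icc (0:ℝ) 1) :=
    variationOnFromTo.monotoneOn (lbv_of_bv hbv) h0
  intro t ht
  rw [Metric.continuousWithinAt_iff]
  intro ε hε
  have hdist : ∀ a b : ℝ, a ∈ Icc (0:ℝ) 1 → b ∈ Icc (0:ℝ) 1 → a ≤ b →
      eVariationOn γ (Icc (0:ℝ) 1 ∩ Icc a b) ≤ ENNReal.ofReal (ε/2) →
      dist (v b) (v a) < ε := by
    intro a b ha hb hab hvar
    rw [Real.dist_eq, abs_of_nonneg (sub_nonneg.2 (hmono ha hb hab)), variation_sub hbv ha hb hab]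
    calc (eVariationOn γ (Icc (0:ℝ) 1 ∩ Icc a b)).toReal
        ≤ (ENNReal.ofReal (ε/2)).toReal :=
          ENNReal.toReal_mono ENNReal.ofReal_ne_top hvar
      _ = ε/2 := ENNReal.toReal_ofReal (by linarith)
      _ < ε := by linarith
  have hright : ∃ δ₁ > 0, ∀ x ∈ Icc (0:ℝ) 1, t ≤ x → x - t < δ₁ → dist (v x) (v t) < ε := by
    by_cases ht1 : t < 1
    · obtain ⟨b, hb01, htb, hbvar⟩ := evar_small_right hγ hbv ht ht1 (by linarith : (0:ℝ) < ε/2)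
      refine ⟨b - t, by linarith, fun x hx htx hxb => ?_⟩
      have hxb' : x ≤ b := by linarith
      refine hdist t x ht hx htx (le_trans ?_ hbvar)
      exact eVariationOn.mono γ (inter_subset_inter_right _ (Icc_subset_Icc_right hxb'))
    · refine ⟨1, one_pos, fun x hx htx _ => ?_⟩
      have : x = t := le_antisymm (hx.2.trans (not_lt.mp ht1)) htx
      rw [this]; simpa using hε
  have hleft : ∃ δ₂ > 0, ∀ x ∈ Icc (0:ℝ) 1, x ≤ t → t - x < δ₂ → dist (v x) (v t) < ε := by
    by_cases ht0 : 0 < t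
    · obtain ⟨a, ha01, hat, havar⟩ := evar_small_left hγ hbv ht ht0 (by linarith : (0:ℝ) < ε/2)
      refine ⟨t - a, by linarith, fun x hx hxt hax => ?_⟩
      have hax' : a ≤ x := by linarith
      rw [dist_comm]
      refine hdist x t hx ht hxt (le_trans ?_ havar)
      exact eVariationOn.mono γ (inter_subset_inter_right _ (Icc_subset_Icc_left hax'))
    · refine ⟨1, one_pos, fun x hx hxt _ => ?_⟩
      have : x = t := le_antisymm hxt (le_trans (not_lt.mp ht0) hx.1)
      rw [this]; simpa using hε
  obtain ⟨δ₁, hδ₁, H₁⟩ := hright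
  obtain ⟨δ₂, hδ₂, H₂⟩ := hleft
  refine ⟨min δ₁ δ₂, lt_min hδ₁ hδ₂, fun x hx hxd => ?_⟩
  rcases le_total t x with htx | hxt
  · refine H₁ x hx htx ?_
    rw [Real.dist_eq, abs_of_nonneg (by linarith)] at hxd
    exact lt_of_lt_of_le hxd (min_le_left _ _)
  · refine H₂ x hx hxt ?_
    rw [Real.dist_eq, abs_of_nonpos (by linarith)] at hxd
    have := lt_of_lt_of_le hxd (min_le_right _ _)
    linarith

lemma variation_surj (hγ : ContinuousOn γ (Icc (0:ℝ) 1))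
    (hbv : eVariationOn γ (Icc (0:ℝ) 1) ≠ ⊤) :
    Icc (0:ℝ) (eVariationOn γ (Icc (0:ℝ) 1)).toReal ⊆
      (variationOnFromTo γ (Icc (0:ℝ) 1) 0) '' (Icc (0:ℝ) 1) := by
  have h1 : variationOnFromTo γ (Icc (0:ℝ) 1) 0 0 = 0 := variationOnFromTo.self _ _ _
  have h2 : variationOnFromTo γ (Icc (0:ℝ) 1) 0 1
      = (eVariationOn γ (Icc (0:ℝ) 1)).toReal := by
    rw [variationOnFromTo.eq_of_le γ _ zero_le_one, Icc_inter_Icc, sup_idem, inf_idem]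
  have := intermediate_value_Icc (zero_le_one (α := ℝ)) (variation_continuousOn hγ hbv)
  rw [h1, h2] at this
  exact this

lemma natParam_eq (hbv : eVariationOn γ (Icc (0:ℝ) 1) ≠ ⊤) {b : ℝ} (hb : b ∈ Icc (0:ℝ) 1) :
    naturalParameterization γ (Icc (0:ℝ) 1) 0 (variationOnFromTo γ (Icc (0:ℝ) 1) 0 b) = γ b := by
  have h0 : (0:ℝ) ∈ Icc (0:ℝ) 1 := ⟨le_rfl, zero_le_one⟩
  exact edist_eq_zero.mp (edist_naturalParameterization_eq_zero (lbv_of_bv hbv) h0 hb)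

lemma dist_le_variation (hbv : eVariationOn γ (Icc (0:ℝ) 1) ≠ ⊤) {x y : ℝ}
    (hx : x ∈ Icc (0:ℝ) 1) (hy : y ∈ Icc (0:ℝ) 1) (hxy : x ≤ y) :
    dist (γ x) (γ y) ≤
      variationOnFromTo γ (Icc (0:ℝ) 1) 0 y - variationOnFromTo γ (Icc (0:ℝ) 1) 0 x := by
  rw [variation_sub hbv hx hy hxy, dist_edist]
  refine ENNReal.toReal_mono (lbv_of_bv hbv x y hx hy) ?_
  exact eVariationOn.edist_le γ ⟨hx, le_rfl, hxy⟩ ⟨hy, hxy, le_rfl⟩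

lemma natParam_dist_le (hγc : ContinuousOn γ (Icc (0:ℝ) 1))
    (hbv : eVariationOn γ (Icc (0:ℝ) 1) ≠ ⊤) {a b : ℝ}
    (ha : a ∈ Icc (0:ℝ) (eVariationOn γ (Icc (0:ℝ) 1)).toReal)
    (hb : b ∈ Icc (0:ℝ) (eVariationOn γ (Icc (0:ℝ) 1)).toReal) :
    dist (naturalParameterization γ (Icc (0:ℝ) 1) 0 a)
      (naturalParameterization γ (Icc (0:ℝ) 1) 0 b) ≤ |a - b| := by
  obtain ⟨x, hx, hvx⟩ := variation_surj hγc hbv ha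
  obtain ⟨y, hy, hvy⟩ := variation_surj hγc hbv hb
  subst hvx; subst hvy
  rw [natParam_eq hbv hx, natParam_eq hbv hy]
  rcases le_total x y with hxy | hyx
  · have h1 := dist_le_variation hbv hx hy hxy
    have h2 := neg_abs_le
      (variationOnFromTo γ (Icc (0:ℝ) 1) 0 x - variationOnFromTo γ (Icc (0:ℝ) 1) 0 y)
    linarith
  · have h1 := dist_le_variation hbv hy hx hyx
    rw [dist_comm] at h1
    have h2 := le_abs_self
      (variationOnFromTo γ (Icc (0:ℝ) 1) 0 x - variationOnFromTo γ (Icc (0:ℝ) 1) 0 y)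
    linarith

end var

lemma dInfFun_upper_gradient {E : Set X} {delta M : ℝ} {g h : X → ℝ} {C : ℝ}
    (hdelta : 0 < delta) (hgc : Continuous g) (hg0 : ∀ x, 0 ≤ g x)
    (hb : ∀ x ∈ E, |h x| ≤ C) (γ : ℝ → X) (hrect : IsRectCurve γ) :
    ENNReal.ofReal |dInfFun E delta M g h (γ 1) - dInfFun E delta M g h (γ 0)| ≤
      pathIntegral (fun x => ENNReal.ofReal (g x)) γ := by
  obtain ⟨hcurve, hlen⟩ := hrect
  have hbv : eVariationOn γ (Icc (0:ℝ) 1) ≠ ⊤ := hlen.ne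
  have hγc : ContinuousOn γ (Icc (0:ℝ) 1) := hcurve
  set f := dInfFun E delta M g h with hf
  set L := (curveLen γ).toReal with hL
  set γ' := naturalParameterization γ (Icc (0:ℝ) 1) 0 with hγ'
  have hL0 : 0 ≤ L := ENNReal.toReal_nonneg
  have hlip : ∀ a ∈ Icc 0 L, ∀ b ∈ Icc 0 L, dist (γ' a) (γ' b) ≤ |a - b| := by
    intro a ha b hb'; exact natParam_dist_le hγc hbv ha hb'
  have h0mem : (0:ℝ) ∈ Icc (0:ℝ) 1 := ⟨le_rfl, zero_le_one⟩
  have h1mem : (1:ℝ) ∈ Icc (0:ℝ) 1 := ⟨zero_le_one, le_rfl⟩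
  have hv0 : variationOnFromTo γ (Icc (0:ℝ) 1) 0 0 = 0 := variationOnFromTo.self _ _ _
  have hv1 : variationOnFromTo γ (Icc (0:ℝ) 1) 0 1 = L := by
    rw [variationOnFromTo.eq_of_le γ _ zero_le_one, Icc_inter_Icc, sup_idem, inf_idem]
    rfl
  have hend0 : γ' 0 = γ 0 := by
    have h1 := natParam_eq hbv h0mem; rwa [hv0] at h1
  have hend1 : γ' L = γ 1 := by
    have h1 := natParam_eq hbv h1mem; rwa [hv1] at h1
  have hγ'cont : ContinuousOn γ' (Icc 0 L) := by
    refine LipschitzOnWith.continuousOn (K := 1) ?_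
    refine LipschitzOnWith.of_dist_le_mul fun a ha b hb' => ?_
    rw [NNReal.coe_one, one_mul, Real.dist_eq]
    exact hlip a ha b hb'
  have hGcont : ContinuousOn (fun r => g (γ' r)) (Icc 0 L) := hgc.comp_continuousOn hγ'cont
  have main : |f (γ 1) - f (γ 0)| ≤ ∫ r in Icc 0 L, g (γ' r) := by
    refine le_of_forall_pos_le_add fun ε hε => ?_
    set ε' := ε / (L + 1) with hε'
    have hε'pos : 0 < ε' := by positivity
    obtain ⟨η, hη, hηuc⟩ := Metric.uniformContinuousOn_iff.mp
      (isCompact_Icc.uniformContinuousOn_of_continuous hGcont) ε' hε'pos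
    set θ := min (η/2) delta with hθ
    have hθpos : 0 < θ := lt_min (by linarith) hdelta
    set m := max 1 ⌈L / θ⌉₊ with hm
    have hm0 : 0 < m := lt_of_lt_of_le one_pos (le_max_left _ _)
    have hmR : (0:ℝ) < m := by exact_mod_cast hm0
    set c := L / m with hc
    have hc0 : 0 ≤ c := div_nonneg hL0 hmR.le
    have hcθ : c ≤ θ := by
      rw [hc, div_le_iff₀ hmR]
      have h1 : L ≤ (⌈L / θ⌉₊ : ℝ) * θ := by
        have h2 := Nat.le_ceil (L / θ)
        calc L = (L / θ) * θ := by field_simp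
          _ ≤ (⌈L / θ⌉₊ : ℝ) * θ := mul_le_mul_of_nonneg_right h2 hθpos.le
      have h3 : (⌈L / θ⌉₊ : ℝ) ≤ (m : ℝ) := by exact_mod_cast le_max_right 1 ⌈L / θ⌉₊
      calc L ≤ (⌈L / θ⌉₊ : ℝ) * θ := h1
        _ ≤ (m : ℝ) * θ := mul_le_mul_of_nonneg_right h3 hθpos.le
        _ = θ * m := mul_comm _ _
    set r : ℕ → ℝ := fun i => i * c with hr
    have hr0 : r 0 = 0 := by simp [hr]
    have hrm : r m = L := by
      rw [hr]
      simp only [hc]; field_simp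
    have hrstep : ∀ i : ℕ, r (i+1) - r i = c := by
      intro i; simp only [hr]; push_cast; ring
    have hrmono : ∀ i j : ℕ, i ≤ j → r i ≤ r j := fun i j hij =>
      mul_le_mul_of_nonneg_right (by exact_mod_cast hij) hc0
    have hrmem : ∀ i ≤ m, r i ∈ Icc 0 L := fun i hi =>
      ⟨mul_nonneg (Nat.cast_nonneg i) hc0, by rw [← hrm]; exact hrmono i m hi⟩
    have hrle : ∀ i : ℕ, r i ≤ r (i+1) := fun i => by linarith [hrstep i]
    have hInt : ∀ (a b : ℝ), a ∈ Icc 0 L → b ∈ Icc 0 L → a ≤ b →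
        IntervalIntegrable (fun x => g (γ' x) + ε') volume a b := by
      intro a b ha hb' hab
      refine ContinuousOn.intervalIntegrable ?_
      refine ContinuousOn.add (hGcont.mono ?_) continuousOn_const
      rw [uIcc_of_le hab]
      exact Icc_subset_Icc ha.1 hb'.2
    have hstepbd : ∀ i < m, ∀ a ∈ Icc (r i) (r (i+1)),
        g (γ' a) * c ≤ ∫ x in (r i)..(r (i+1)), (g (γ' x) + ε') := by
      intro i hi a ha
      have hri := hrmem i hi.le
      have hri1 := hrmem (i+1) hi
      have hsub : Icc (r i) (r (i+1)) ⊆ Icc 0 L := Icc_subset_Icc hri.1 hri1.2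
      have hptwise : ∀ x ∈ Icc (r i) (r (i+1)), g (γ' a) ≤ g (γ' x) + ε' := by
        intro x hx
        have hlen' := hrstep i
        have hd : dist a x < η := by
          rw [Real.dist_eq]
          have h1 : |a - x| ≤ c := by
            rw [abs_sub_le_iff]
            constructor <;> linarith [ha.1, ha.2, hx.1, hx.2]
          have h2 : c ≤ η/2 := le_trans hcθ (min_le_left _ _)
          linarith
        have h3 := hηuc a (hsub ha) x (hsub hx) hd
        rw [Real.dist_eq] at h3
        have h4 := abs_sub_lt_iff.mp h3
        linarith [h4.1]
      calc g (γ' a) * c = ∫ _ in (r i)..(r (i+1)), g (γ' a) := by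
            rw [intervalIntegral.integral_const, smul_eq_mul, hrstep i, mul_comm]
        _ ≤ _ := intervalIntegral.integral_mono_on (hrle i)
            intervalIntegrable_const (hInt _ _ hri hri1 (hrle i)) hptwise
    have hdistle : ∀ i < m, dist (γ' (r i)) (γ' (r (i+1))) ≤ c := by
      intro i hi
      have h1 := hlip _ (hrmem i hi.le) _ (hrmem (i+1) hi)
      rwa [abs_sub_comm, abs_of_nonneg (by linarith [hrstep i] : (0:ℝ) ≤ r (i+1) - r i),
        hrstep i] at h1
    have hdistdelta : ∀ i < m, dist (γ' (r i)) (γ' (r (i+1))) ≤ delta := fun i hi =>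
      le_trans (hdistle i hi) (le_trans hcθ (min_le_right _ _))
    have hfwd : ∀ i < m, f (γ' (r (i+1))) - f (γ' (r i)) ≤
        ∫ x in (r i)..(r (i+1)), (g (γ' x) + ε') := by
      intro i hi
      have hkey := dInfFun_le_key (E := E) (M := M) hg0 hb (hdistdelta i hi)
      have h1 : g (γ' (r i)) * dist (γ' (r i)) (γ' (r (i+1))) ≤ g (γ' (r i)) * c :=
        mul_le_mul_of_nonneg_left (hdistle i hi) (hg0 _)
      have h2 := hstepbd i hi (r i) ⟨le_rfl, hrle i⟩
      rw [← hf] at hkey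
      linarith
    have hbwd : ∀ i < m, f (γ' (r i)) - f (γ' (r (i+1))) ≤
        ∫ x in (r i)..(r (i+1)), (g (γ' x) + ε') := by
      intro i hi
      have hd := hdistdelta i hi
      rw [dist_comm] at hd
      have hkey := dInfFun_le_key (E := E) (M := M) hg0 hb hd
      have hd2 := hdistle i hi
      rw [dist_comm] at hd2
      have h1 : g (γ' (r (i+1))) * dist (γ' (r (i+1))) (γ' (r i)) ≤ g (γ' (r (i+1))) * c :=
        mul_le_mul_of_nonneg_left hd2 (hg0 _)
      have h2 := hstepbd i hi (r (i+1)) ⟨hrle i, le_rfl⟩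
      rw [← hf] at hkey
      linarith
    have hsumint : ∑ i ∈ Finset.range m, (∫ x in (r i)..(r (i+1)), (g (γ' x) + ε')) =
        ∫ x in (0:ℝ)..L, (g (γ' x) + ε') := by
      have h1 := intervalIntegral.sum_integral_adjacent_intervals (μ := volume)
        (f := fun x => g (γ' x) + ε') (a := r) (n := m)
        (fun i hi => hInt _ _ (hrmem i hi.le) (hrmem (i+1) hi) (hrle i))
      rwa [hr0, hrm] at h1
    have htel1 : f (γ 1) - f (γ 0) ≤ ∫ x in (0:ℝ)..L, (g (γ' x) + ε') := by
      have h1 := Finset.sum_le_sum (fun i hi => hfwd i (Finset.mem_range.mp hi))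
      rw [Finset.sum_range_sub (fun i => f (γ' (r i))), hsumint, hrm, hr0, hend0, hend1] at h1
      exact h1
    have htel2 : f (γ 0) - f (γ 1) ≤ ∫ x in (0:ℝ)..L, (g (γ' x) + ε') := by
      have h1 := Finset.sum_le_sum (fun i hi => hbwd i (Finset.mem_range.mp hi))
      rw [Finset.sum_range_sub' (fun i => f (γ' (r i))), hsumint, hrm, hr0, hend0, hend1] at h1
      exact h1
    have hIntG : IntervalIntegrable (fun x => g (γ' x)) volume 0 L := by
      refine ContinuousOn.intervalIntegrable ?_
      rwa [uIcc_of_le hL0]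
    have hintsplit : ∫ x in (0:ℝ)..L, (g (γ' x) + ε') =
        (∫ x in (0:ℝ)..L, g (γ' x)) + ε' * L := by
      rw [intervalIntegral.integral_add hIntG intervalIntegrable_const,
        intervalIntegral.integral_const, smul_eq_mul]
      ring
    have hIccInt : ∫ x in (0:ℝ)..L, g (γ' x) = ∫ x in Icc 0 L, g (γ' x) := by
      rw [intervalIntegral.integral_of_le hL0, ← integral_Icc_eq_integral_Ioc]
    have hεL : ε' * L ≤ ε := by
      rw [hε', div_mul_eq_mul_div, div_le_iff₀ (by linarith : (0:ℝ) < L + 1)]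
      nlinarith
    rw [abs_le]
    constructor
    · rw [← hIccInt]; linarith [htel2, hintsplit, hεL]
    · rw [← hIccInt]; linarith [htel1, hintsplit, hεL]
  have hIntOn : IntegrableOn (fun r => g (γ' r)) (Icc 0 L) volume := hGcont.integrableOn_Icc
  have heq : ENNReal.ofReal (∫ r in Icc 0 L, g (γ' r)) =
      ∫⁻ r in Icc 0 L, ENNReal.ofReal (g (γ' r)) :=
    MeasureTheory.ofReal_integral_eq_lintegral_ofReal hIntOn (ae_of_all _ fun x => hg0 _)
  calc ENNReal.ofReal |f (γ 1) - f (γ 0)| ≤ ENNReal.ofReal (∫ r in Icc 0 L, g (γ' r)) :=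
        ENNReal.ofReal_le_ofReal main
    _ = pathIntegral (fun x => ENNReal.ofReal (g x)) γ := by rw [heq]; rfl


end auxlem


/-- the discrete-path infimum function is locally Lipschitz and has `g`
as an upper gradient. -/
theorem stmt5 {X : Type*} [MetricSpace X] [MeasurableSpace X]
    (E : Set X) (hE : E.Nonempty) (delta M : ℝ) (hdelta : 0 < delta) (hM : 0 < M)
    (g : X → ℝ) (hgc : Continuous g) (hg0 : ∀ x, 0 ≤ g x)
    (h : X → ℝ) (hb : ∃ C : ℝ, ∀ x ∈ E, |h x| ≤ C) :
    LocallyLipschitz (dInfFun E delta M g h) ∧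
      IsUpperGradient (fun x => ENNReal.ofReal (g x)) (dInfFun E delta M g h) := by
  obtain ⟨C, hbC⟩ := hb
  refine ⟨dInfFun_locallyLipschitz hdelta hgc hg0 hbC, ?_⟩
  intro γ hγ _
  exact dInfFun_upper_gradient hdelta hgc hg0 hbC γ hγ
end

section
/- In the setting of the discrete-path infimum construction: let δ > 0, E ⊂ X non-empty, g:X→[0,∞) continuous, h:E→ℝ bounded, M > 0, and f(y) = min(inf_P {h(p_0) + ∑ g(p_k)d(p_k,p_{k+1})}, M) over discrete paths from E to y with Mesh ≤ δ. Then for all x, y ∈ X with d(x,y) ≤ δ, one has |f(x) − f(y)| ≤ max(g(x), g(y))·d(x,y). -/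
open MeasureTheory Metric Set ENNReal NNReal Filter

/-- the discrete-path infimum function satisfies the two-point estimate
`|f(x) − f(y)| ≤ max(g(x), g(y))·d(x,y)` whenever `d(x,y) ≤ δ`. -/
theorem stmt7 {X : Type*} [MetricSpace X]
    (E : Set X) (hE : E.Nonempty) (delta M : ℝ) (hdelta : 0 < delta) (hM : 0 < M)
    (g : X → ℝ) (hgc : Continuous g) (hg0 : ∀ x, 0 ≤ g x)
    (h : X → ℝ) (hb : ∃ C : ℝ, ∀ x ∈ E, |h x| ≤ C) :
    ∀ x y : X, dist x y ≤ delta →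
      |dInfFun E delta M g h x - dInfFun E delta M g h y| ≤
        max (g x) (g y) * dist x y := by
  obtain ⟨C, hC⟩ := hb
  -- Bounded below and nonempty for the sets involved
  have hbdd : ∀ z : X, BddBelow (insert M {v : ℝ | ∃ (n : ℕ) (p : ℕ → X),
      dAdm E delta z n p ∧ v = dPathVal g h n p}) := by
    intro z
    refine ⟨min M (-C), ?_⟩
    rintro v (rfl | ⟨n, p, hadm, rfl⟩)
    · exact min_le_left _ _
    · refine le_trans (min_le_right _ _) ?_
      have h1 : -C ≤ h (p 0) := neg_le_of_abs_le (hC _ hadm.1)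
      have h2 : (0:ℝ) ≤ ∑ k ∈ Finset.range n, g (p k) * dist (p k) (p (k+1)) :=
        Finset.sum_nonneg fun k _ => mul_nonneg (hg0 _) dist_nonneg
      unfold dPathVal; linarith
  have hne : ∀ z : X, (insert M {v : ℝ | ∃ (n : ℕ) (p : ℕ → X),
      dAdm E delta z n p ∧ v = dPathVal g h n p}).Nonempty :=
    fun z => ⟨M, Set.mem_insert _ _⟩
  -- Key one-sided estimate
  have key : ∀ x y : X, dist x y ≤ delta →
      dInfFun E delta M g h x ≤ dInfFun E delta M g h y + g y * dist x y := by
    intro x y hxy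
    have hc : 0 ≤ g y * dist x y := mul_nonneg (hg0 _) dist_nonneg
    rw [dInfFun, ← sub_le_iff_le_add]
    rw [dInfFun]
    apply le_csInf (hne y)
    rintro v (rfl | ⟨n, p, hadm, rfl⟩)
    · -- v = M : f x ≤ M ≤ M + c
      refine sub_le_iff_le_add.mpr (le_trans ?_ (le_add_of_nonneg_right hc))
      exact csInf_le (hbdd x) (Set.mem_insert _ _)
    · rw [sub_le_iff_le_add]
      obtain ⟨hpE, hpn, hinj, hmesh⟩ := hadm
      by_cases hx : ∃ k ≤ n, p k = x
      · -- truncate the path at the first occurrence of x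
        obtain ⟨k, hk, hpk⟩ := hx
        have hadm' : dAdm E delta x k p := by
          refine ⟨hpE, hpk, fun a ha b hb hab => hinj a (ha.trans hk) b (hb.trans hk) hab,
            fun j hj => hmesh j (lt_of_lt_of_le hj hk)⟩
        have hle : dPathVal g h k p ≤ dPathVal g h n p := by
          unfold dPathVal
          have := Finset.sum_le_sum_of_subset_of_nonneg
            (Finset.range_subset_range.mpr hk)
            (f := fun j => g (p j) * dist (p j) (p (j+1)))
            (fun j _ _ => mul_nonneg (hg0 _) dist_nonneg)
          linarith
        refine le_trans (csInf_le (hbdd x) ?_) (le_trans hle (le_add_of_nonneg_right hc))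
        exact Set.mem_insert_of_mem _ ⟨k, p, hadm', rfl⟩
      · -- extend the path by one step to x
        push_neg at hx
        set p' : ℕ → X := fun j => if j ≤ n then p j else x with hp'
        have hadm' : dAdm E delta x (n+1) p' := by
          refine ⟨?_, ?_, ?_, ?_⟩
          · simp only [hp', if_pos (Nat.zero_le n)]; exact hpE
          · simp [hp']
          · intro a ha b hb hab
            rcases Nat.lt_or_ge a (n+1) with ha' | ha' <;>
              rcases Nat.lt_or_ge b (n+1) with hb' | hb'
            · have han : a ≤ n := Nat.lt_succ_iff.mp ha'
              have hbn : b ≤ n := Nat.lt_succ_iff.mp hb'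
              simp only [hp', if_pos han, if_pos hbn] at hab
              exact hinj a han b hbn hab
            · have hb'' : b = n + 1 := le_antisymm hb hb'
              have han : a ≤ n := Nat.lt_succ_iff.mp ha'
              simp only [hp', if_pos han, hb''] at hab
              simp only [Nat.not_succ_le_self n, if_neg, Nat.succ_le_of_lt] at hab
              exact absurd hab (hx a han)
            · have ha'' : a = n + 1 := le_antisymm ha ha'
              have hbn : b ≤ n := Nat.lt_succ_iff.mp hb'
              simp only [hp', if_pos hbn, ha''] at hab
              simp only [Nat.not_succ_le_self n, if_neg, Nat.succ_le_of_lt] at hab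
              exact absurd hab.symm (hx b hbn)
            · omega
          · intro j hj
            rcases Nat.lt_or_ge j n with hj' | hj'
            · have h1 : j ≤ n := hj'.le
              have h2 : j + 1 ≤ n := hj'
              simp only [hp', if_pos h1, if_pos h2]
              exact hmesh j hj'
            · have hjn : j = n := le_antisymm (Nat.lt_succ_iff.mp hj) hj'
              have e1 : p' j = p n := by simp [hp', hjn]
              have e2 : p' (j+1) = x := by simp [hp', hjn]
              rw [e1, e2, hpn, dist_comm]
              exact hxy
        have hval : dPathVal g h (n+1) p' = dPathVal g h n p + g y * dist x y := by
          unfold dPathVal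
          rw [Finset.sum_range_succ]
          have h0 : p' 0 = p 0 := by simp [hp']
          have hterm : ∀ k ∈ Finset.range n,
              g (p' k) * dist (p' k) (p' (k+1)) = g (p k) * dist (p k) (p (k+1)) := by
            intro k hk
            have hk' : k < n := Finset.mem_range.mp hk
            simp only [hp', if_pos hk'.le, if_pos (Nat.succ_le_of_lt hk')]
          rw [Finset.sum_congr rfl hterm, h0]
          have hlast : g (p' n) * dist (p' n) (p' (n+1)) = g y * dist x y := by
            simp only [hp', le_refl, if_pos, Nat.not_succ_le_self n, if_neg,
              not_false_iff]
            rw [hpn, dist_comm]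
          rw [hlast]; ring
        refine csInf_le (hbdd x) ?_ |>.trans (le_of_eq hval)
        exact Set.mem_insert_of_mem _ ⟨n+1, p', hadm', rfl⟩
  intro x y hxy
  have hd : 0 ≤ dist x y := dist_nonneg
  have h1 := key x y hxy
  have h2 := key y x (by rwa [dist_comm])
  rw [dist_comm y x] at h2
  have hgx : g x * dist x y ≤ max (g x) (g y) * dist x y :=
    mul_le_mul_of_nonneg_right (le_max_left _ _) hd
  have hgy : g y * dist x y ≤ max (g x) (g y) * dist x y :=
    mul_le_mul_of_nonneg_right (le_max_right _ _) hd
  rw [abs_sub_le_iff]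
  constructor <;> linarith
end

section
/- Let (X,d,μ) be a metric measure space, f ∈ N^{1,p}(X) with upper gradient g ∈ L^p(X), and let f̃ ∈ L^p(X) be a continuous function with f̃ = f on a closed set K ⊂ X. If g is an upper gradient for f̃ on X∖K (i.e., the upper gradient inequality holds for all rectifiable curves contained in X∖K), then g is an upper gradient for f̃ on all of X; in particular f̃ ∈ N^{1,p}(X). -/
open MeasureTheory Metric Set ENNReal NNReal Filter

open Topology

section Helpers

variable {X : Type*} [MetricSpace X]


variable {X : Type*} [MetricSpace X]

lemma small_var_right {γ : ℝ → X} {c d : ℝ} (hcd : c < d)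
    (hcont : ContinuousWithinAt γ (Icc c d) c)
    (hBV : eVariationOn γ (Icc c d) ≠ ⊤) {ε : ℝ} (hε : 0 < ε) :
    ∃ u, c < u ∧ u ≤ d ∧ eVariationOn γ (Icc c u) ≤ ENNReal.ofReal ε := by
  by_contra hcon
  push_neg at hcon
  have hcon' : ∀ u, c < u → u ≤ d → ENNReal.ofReal ε ≤ eVariationOn γ (Icc c u) :=
    fun u h1 h2 => (hcon u h1 h2).le
  obtain ⟨δ, hδ, hδ'⟩ := Metric.continuousWithinAt_iff.1 hcont (ε/2) (by linarith)
  set u₀ := min d (c + δ/2) with hu₀def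
  have hcu₀ : c < u₀ := lt_min hcd (by linarith)
  have hu₀d : u₀ ≤ d := min_le_left _ _
  have hnear : ∀ v ∈ Icc c u₀, dist (γ v) (γ c) ≤ ε/2 := by
    intro v hv
    refine le_of_lt (hδ' ⟨hv.1, hv.2.trans hu₀d⟩ ?_)
    rw [Real.dist_eq, abs_sub_lt_iff]
    have h2 : v ≤ c + δ/2 := hv.2.trans (min_le_right _ _)
    constructor <;> linarith [hv.1]
  set V := eVariationOn γ (Icc c u₀) with hVdef
  have hVfin : V ≠ ⊤ :=
    fun h => hBV (top_le_iff.1 (h ▸ eVariationOn.mono γ (Icc_subset_Icc_right hu₀d)))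
  have main : V + ENNReal.ofReal ε ≤ ENNReal.ofReal (ε/2) + V := by
    have hne : Nonempty (ℕ × {u : ℕ → ℝ // Monotone u ∧ ∀ i, u i ∈ Icc c u₀}) :=
      ⟨0, Classical.choice (eVariationOn.nonempty_monotone_mem ⟨c, le_rfl, hcu₀.le⟩)⟩
    rw [hVdef, eVariationOn, ENNReal.iSup_add]
    refine iSup_le ?_
    rintro ⟨n, u, hu, hus⟩
    dsimp only
    by_cases hex : ∃ i, c < u i
    · set j := Nat.find hex with hjdef
      have hj : c < u j := Nat.find_spec hex
      have hjmin : ∀ i < j, u i = c := fun i hi =>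
        le_antisymm (not_lt.1 (Nat.find_min hex hi)) (hus i).1
      have hsum : (∑ i ∈ Finset.range n, edist (γ (u (i+1))) (γ (u i)))
          ≤ ENNReal.ofReal (ε/2) + eVariationOn γ (Icc (u j) u₀) := by
        rcases le_or_gt j n with hjn | hnj
        · rw [← Finset.sum_range_add_sum_Ico _ hjn]
          refine add_le_add ?_ ?_
          · rcases eq_or_ne j 0 with hj0 | hj0
            · simp [hj0]
            · obtain ⟨m, hm⟩ := Nat.exists_eq_succ_of_ne_zero hj0
              rw [hm, Finset.sum_range_succ]
              have hz : (∑ i ∈ Finset.range m, edist (γ (u (i+1))) (γ (u i))) = 0 := by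
                refine Finset.sum_eq_zero fun i hi => ?_
                rw [Finset.mem_range] at hi
                rw [hjmin i (by omega), hjmin (i+1) (by omega), edist_self]
              rw [hz, zero_add, hjmin m (by omega), edist_dist]
              exact ENNReal.ofReal_le_ofReal (hnear (u (m+1)) (hus (m+1)))
          · rw [Finset.sum_Ico_eq_sum_range]
            have : ∀ i, u (j + i) ∈ Icc (u j) u₀ := fun i => ⟨hu (Nat.le_add_right _ _), (hus _).2⟩
            have hmono : Monotone (fun i => u (j + i)) :=
              fun a b hab => hu (by omega)
            have := eVariationOn.sum_le (f := γ) (n := n - j) hmono this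
            refine le_trans (le_of_eq (Finset.sum_congr rfl fun i _ => ?_)) this
            congr 2 <;> omega
        · have hz : (∑ i ∈ Finset.range n, edist (γ (u (i+1))) (γ (u i))) = 0 := by
            refine Finset.sum_eq_zero fun i hi => ?_
            rw [Finset.mem_range] at hi
            rw [hjmin i (by omega), hjmin (i+1) (by omega), edist_self]
          rw [hz]; exact zero_le
      calc (∑ i ∈ Finset.range n, edist (γ (u (i+1))) (γ (u i))) + ENNReal.ofReal ε
          ≤ (ENNReal.ofReal (ε/2) + eVariationOn γ (Icc (u j) u₀))
            + eVariationOn γ (Icc c (u j)) :=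
            add_le_add hsum (hcon' (u j) hj ((hus j).2.trans hu₀d))
        _ = ENNReal.ofReal (ε/2) + (eVariationOn γ (Icc c (u j)) + eVariationOn γ (Icc (u j) u₀)) := by
            ring
        _ = ENNReal.ofReal (ε/2) + V := by
            rw [hVdef]
            congr 1
            have := eVariationOn.Icc_add_Icc γ (s := univ) (hus j).1 (hus j).2 (mem_univ (u j))
            simpa using this
    · push_neg at hex
      have hz : (∑ i ∈ Finset.range n, edist (γ (u (i+1))) (γ (u i))) = 0 := by
        refine Finset.sum_eq_zero fun i _ => ?_
        rw [le_antisymm (hex i) (hus i).1, le_antisymm (hex (i+1)) (hus (i+1)).1, edist_self]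
      rw [hz, zero_add]
      exact le_add_left (hcon' u₀ hcu₀ hu₀d)
  rw [add_comm (ENNReal.ofReal (ε/2)) V] at main
  have := (ENNReal.add_le_add_iff_left hVfin).1 main
  rw [ENNReal.ofReal_le_ofReal_iff (by linarith)] at this
  linarith
lemma small_var_left {γ : ℝ → X} {c d : ℝ} (hcd : c < d)
    (hcont : ContinuousWithinAt γ (Icc c d) d)
    (hBV : eVariationOn γ (Icc c d) ≠ ⊤) {ε : ℝ} (hε : 0 < ε) :
    ∃ u, c ≤ u ∧ u < d ∧ eVariationOn γ (Icc u d) ≤ ENNReal.ofReal ε := by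
  set ρ : ℝ → ℝ := fun x => c + d - x with hρdef
  have hρim : ∀ a b : ℝ, ρ '' Icc a b = Icc (c + d - b) (c + d - a) := fun a b =>
    Set.image_const_sub_Icc (c + d) a b
  have hρanti : Antitone ρ := fun x y hxy => by simp [hρdef]; linarith
  have hvar : ∀ a b : ℝ, eVariationOn (γ ∘ ρ) (Icc a b) = eVariationOn γ (Icc (c+d-b) (c+d-a)) :=
    fun a b => by rw [eVariationOn.comp_eq_of_antitoneOn γ ρ (hρanti.antitoneOn _), hρim]
  have hmaps : MapsTo ρ (Icc c d) (Icc c d) := by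
    intro x hx; constructor <;> [skip; skip] <;> simp [hρdef] <;> [linarith [hx.2]; linarith [hx.1]]
  have hρc : ρ c = d := by simp [hρdef]
  have hcont2 : ContinuousWithinAt γ (Icc c d) (ρ c) := by rw [hρc]; exact hcont
  have hcont' : ContinuousWithinAt (γ ∘ ρ) (Icc c d) c :=
    ContinuousWithinAt.comp hcont2
      ((continuous_const.sub continuous_id).continuousWithinAt) hmaps
  have hBV' : eVariationOn (γ ∘ ρ) (Icc c d) ≠ ⊤ := by
    rw [hvar]; simpa using hBV
  obtain ⟨u, hu1, hu2, hu3⟩ := small_var_right hcd hcont' hBV' hε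
  refine ⟨c + d - u, by linarith, by linarith, ?_⟩
  rw [hvar, show c + d - c = d by ring] at hu3
  exact hu3

lemma phi_cont {γ : ℝ → X} (hγ : ContinuousOn γ (Icc 0 1))
    (hBV : eVariationOn γ (Icc 0 1) ≠ ⊤) :
    ContinuousOn (variationOnFromTo γ (Icc 0 1) 0) (Icc 0 1) := by
  have hlbv : LocallyBoundedVariationOn γ (Icc 0 1) :=
    BoundedVariationOn.locallyBoundedVariationOn hBV
  set v := variationOnFromTo γ (Icc 0 1) 0 with hvdef
  have h0mem : (0:ℝ) ∈ Icc (0:ℝ) 1 := ⟨le_rfl, zero_le_one⟩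
  intro t ht
  rw [Metric.continuousWithinAt_iff]
  intro ε hε
  have key : ∀ a b : ℝ, a ∈ Icc (0:ℝ) 1 → b ∈ Icc (0:ℝ) 1 → a ≤ b →
      eVariationOn γ (Icc a b) ≤ ENNReal.ofReal (ε/2) → dist (v b) (v a) < ε := by
    intro a b ha hb hab hvar
    have hadd := variationOnFromTo.add hlbv h0mem ha hb
    have hnn := variationOnFromTo.nonneg_of_le γ (Icc 0 1) hab
    have heq := variationOnFromTo.eq_of_le γ (Icc 0 1) hab
    have hle : eVariationOn γ ((Icc 0 1) ∩ Icc a b) ≤ eVariationOn γ (Icc a b) :=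
      eVariationOn.mono γ inter_subset_right
    have h2 : variationOnFromTo γ (Icc 0 1) a b ≤ ε/2 := by
      rw [heq]
      exact ENNReal.toReal_le_of_le_ofReal (by linarith) (hle.trans hvar)
    have hd : v b - v a = variationOnFromTo γ (Icc 0 1) a b := by rw [hvdef]; linarith
    rw [Real.dist_eq, abs_of_nonneg (by linarith)]
    linarith
  obtain ⟨δ₁, hδ₁, H₁⟩ : ∃ δ₁ > 0, ∀ t' ∈ Icc (0:ℝ) 1, t ≤ t' → t' - t < δ₁ →
      dist (v t') (v t) < ε := by
    rcases lt_or_ge t 1 with h1 | h1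
    · obtain ⟨u, hu1, hu2, hu3⟩ := small_var_right (γ := γ) h1
        ((hγ t ht).mono (Icc_subset_Icc ht.1 le_rfl))
        (fun h => hBV (top_le_iff.1 (h ▸ eVariationOn.mono γ (Icc_subset_Icc ht.1 le_rfl))))
        (half_pos hε)
      refine ⟨u - t, by linarith, fun t' ht' htt' hlt => ?_⟩
      exact key t t' ht ht' htt'
        ((eVariationOn.mono γ (Icc_subset_Icc le_rfl (by linarith))).trans hu3)
    · refine ⟨1, one_pos, fun t' ht' htt' _ => ?_⟩
      have : t' = t := le_antisymm (ht'.2.trans h1) htt'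
      simp [this, hε]
  obtain ⟨δ₂, hδ₂, H₂⟩ : ∃ δ₂ > 0, ∀ t' ∈ Icc (0:ℝ) 1, t' ≤ t → t - t' < δ₂ →
      dist (v t') (v t) < ε := by
    rcases lt_or_ge 0 t with h1 | h1
    · obtain ⟨u, hu1, hu2, hu3⟩ := small_var_left (γ := γ) (c := 0) h1
        ((hγ t ht).mono (Icc_subset_Icc le_rfl ht.2))
        (fun h => hBV (top_le_iff.1 (h ▸ eVariationOn.mono γ (Icc_subset_Icc le_rfl ht.2))))
        (half_pos hε)
      refine ⟨t - u, by linarith, fun t' ht' htt' hlt => ?_⟩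
      rw [dist_comm]
      exact key t' t ht' ht htt'
        ((eVariationOn.mono γ (Icc_subset_Icc (by linarith) le_rfl)).trans hu3)
    · refine ⟨1, one_pos, fun t' ht' htt' _ => ?_⟩
      have : t' = t := le_antisymm htt' (h1.trans ht'.1)
      simp [this, hε]
  refine ⟨min δ₁ δ₂, lt_min hδ₁ hδ₂, fun {t'} ht' hd => ?_⟩
  rw [Real.dist_eq] at hd
  rcases le_total t t' with h | h
  · refine H₁ t' ht' h ?_
    have := abs_lt.1 hd
    linarith [min_le_left δ₁ δ₂, this.2]
  · refine H₂ t' ht' h ?_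
    have := abs_lt.1 hd
    linarith [min_le_right δ₁ δ₂, this.1]

lemma phi_surj {γ : ℝ → X} (hγ : ContinuousOn γ (Icc 0 1))
    (hBV : eVariationOn γ (Icc 0 1) ≠ ⊤) :
    (variationOnFromTo γ (Icc 0 1) 0) '' Icc 0 1
      = Icc 0 (variationOnFromTo γ (Icc 0 1) 0 1) := by
  have hlbv : LocallyBoundedVariationOn γ (Icc 0 1) :=
    BoundedVariationOn.locallyBoundedVariationOn hBV
  have h0mem : (0:ℝ) ∈ Icc (0:ℝ) 1 := ⟨le_rfl, zero_le_one⟩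
  have h1mem : (1:ℝ) ∈ Icc (0:ℝ) 1 := ⟨zero_le_one, le_rfl⟩
  apply Subset.antisymm
  · rintro _ ⟨t, ht, rfl⟩
    exact ⟨variationOnFromTo.nonneg_of_le γ (Icc 0 1) ht.1,
      variationOnFromTo.monotoneOn hlbv h0mem ht h1mem ht.2⟩
  · have h0 : variationOnFromTo γ (Icc 0 1) 0 0 = 0 := variationOnFromTo.self _ _ _
    have := intermediate_value_Icc zero_le_one (phi_cont hγ hBV)
    rwa [h0] at this

lemma S5add (h : ℝ → ℝ≥0∞) {c d e : ℝ} (h1 : c ≤ d) (h2 : d ≤ e) :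
    (∫⁻ x in Icc c d, h x) + ∫⁻ x in Icc d e, h x = ∫⁻ x in Icc c e, h x := by
  have heq : (∫⁻ x in Icc d e, h x) = ∫⁻ x in Ioc d e, h x :=
    (setLIntegral_congr (Ioc_ae_eq_Icc (α := ℝ) (μ := volume))).symm
  rw [heq, ← lintegral_union measurableSet_Ioc
    (by apply Set.disjoint_left.2; rintro x ⟨_, hx⟩ ⟨hx2, _⟩; linarith),
    Icc_union_Ioc_eq_Icc h1 h2]

lemma affine_image {a b : ℝ} (hab : a ≤ b) {u v : ℝ} (huv : u ≤ v) :
    (fun t : ℝ => a + t * (b - a)) '' Icc u v = Icc (a + u * (b - a)) (a + v * (b - a)) := by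
  ext x
  simp only [mem_image, mem_Icc]
  constructor
  · rintro ⟨w, ⟨hw1, hw2⟩, rfl⟩
    constructor <;> nlinarith
  · rintro ⟨h1, h2⟩
    rcases eq_or_lt_of_le hab with heq | hlt
    · subst heq
      exact ⟨u, ⟨le_rfl, huv⟩, by simp at h1 h2 ⊢; linarith⟩
    · have hba : (0:ℝ) < b - a := by linarith
      refine ⟨(x - a)/(b - a), ⟨?_, ?_⟩, ?_⟩
      · rw [le_div_iff₀ hba]; linarith
      · rw [div_le_iff₀ hba]; linarith
      · field_simp; ring

lemma nat_param_eq {γ : ℝ → X} (hlbv : LocallyBoundedVariationOn γ (Icc 0 1)) {t : ℝ}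
    (ht : t ∈ Icc (0:ℝ) 1) :
    naturalParameterization γ (Icc 0 1) 0 (variationOnFromTo γ (Icc 0 1) 0 t) = γ t :=
  edist_eq_zero.1 (edist_naturalParameterization_eq_zero hlbv ⟨le_rfl, zero_le_one⟩ ht)

lemma sub_var {γ : ℝ → X} {u v : ℝ} (huv : u ≤ v) {p q : ℝ} (hpq : p ≤ q) :
    eVariationOn (fun t => γ (u + t * (v - u))) (Icc p q)
      = eVariationOn γ (Icc (u + p * (v - u)) (u + q * (v - u))) := by
  have hmono : Monotone (fun t : ℝ => u + t * (v - u)) := fun x y hxy => by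
    dsimp only; nlinarith
  rw [show (fun t => γ (u + t * (v - u))) = γ ∘ (fun t : ℝ => u + t * (v - u)) from rfl,
    eVariationOn.comp_eq_of_monotoneOn γ _ (hmono.monotoneOn _), affine_image huv hpq]

lemma sub_mem_Icc {u v : ℝ} (h0 : 0 ≤ u) (huv : u ≤ v) (h1 : v ≤ 1) {t : ℝ}
    (ht : t ∈ Icc (0:ℝ) 1) : u + t * (v - u) ∈ Icc (0:ℝ) 1 := by
  obtain ⟨ht0, ht1⟩ := ht
  constructor <;> nlinarith

lemma sub_cont {γ : ℝ → X} (hγ : ContinuousOn γ (Icc 0 1)) {u v : ℝ}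
    (h0 : 0 ≤ u) (huv : u ≤ v) (h1 : v ≤ 1) :
    ContinuousOn (fun t => γ (u + t * (v - u))) (Icc 0 1) := by
  apply hγ.comp (Continuous.continuousOn (by continuity))
  exact fun t ht => sub_mem_Icc h0 huv h1 ht

lemma sub_rect {X : Type*} [MetricSpace X] [MeasurableSpace X]
    {γ : ℝ → X} (hγ : ContinuousOn γ (Icc 0 1)) (hBV : eVariationOn γ (Icc 0 1) ≠ ⊤)
    {u v : ℝ} (h0 : 0 ≤ u) (huv : u ≤ v) (h1 : v ≤ 1) :
    IsRectCurve (fun t => γ (u + t * (v - u))) := by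
  refine ⟨sub_cont hγ h0 huv h1, ?_⟩
  have : curveLen (fun t => γ (u + t * (v - u)))
      = eVariationOn γ (Icc (u + 0 * (v - u)) (u + 1 * (v - u))) := sub_var huv zero_le_one
  rw [curveLen, sub_var huv zero_le_one, show u + 0 * (v - u) = u by ring,
    show u + 1 * (v - u) = v by ring]
  exact lt_of_le_of_lt (eVariationOn.mono γ (Icc_subset_Icc h0 h1)) (lt_top_iff_ne_top.2 hBV)

lemma subcurve_pathIntegral {X : Type*} [MetricSpace X] [MeasurableSpace X]
    {γ : ℝ → X} (hγ : ContinuousOn γ (Icc 0 1))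
    (hBV : eVariationOn γ (Icc 0 1) ≠ ⊤) (g : X → ℝ≥0∞) {a b : ℝ}
    (h0 : 0 ≤ a) (hab : a ≤ b) (h1 : b ≤ 1) :
    pathIntegral g (fun t => γ (a + t * (b - a)))
      = ∫⁻ x in Icc (variationOnFromTo γ (Icc 0 1) 0 a) (variationOnFromTo γ (Icc 0 1) 0 b),
          g (naturalParameterization γ (Icc 0 1) 0 x) := by
  have hlbvγ : LocallyBoundedVariationOn γ (Icc 0 1) :=
    BoundedVariationOn.locallyBoundedVariationOn hBV
  have habs : Icc a b ⊆ Icc (0:ℝ) 1 := Icc_subset_Icc h0 h1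
  set σ : ℝ → X := fun t => γ (a + t * (b - a)) with hσdef
  have hσcont : ContinuousOn σ (Icc 0 1) := sub_cont hγ h0 hab h1
  have hσvar : ∀ p q : ℝ, p ≤ q → eVariationOn σ (Icc p q)
      = eVariationOn γ (Icc (a + p * (b - a)) (a + q * (b - a))) := fun p q hpq =>
    sub_var hab hpq
  have hσBV : eVariationOn σ (Icc 0 1) ≠ ⊤ := by
    rw [hσvar 0 1 zero_le_one, show a + 0 * (b - a) = a by ring, show a + 1 * (b - a) = b by ring]
    exact fun h => hBV (top_le_iff.1 (h ▸ eVariationOn.mono γ habs))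
  have hlbvσ : LocallyBoundedVariationOn σ (Icc 0 1) :=
    BoundedVariationOn.locallyBoundedVariationOn hσBV
  set φ := variationOnFromTo γ (Icc 0 1) 0 with hφdef
  set φσ := variationOnFromTo σ (Icc 0 1) 0 with hφσdef
  set ℓ := (curveLen σ).toReal with hℓdef
  have h0mem : (0:ℝ) ∈ Icc (0:ℝ) 1 := ⟨le_rfl, zero_le_one⟩
  have h1mem : (1:ℝ) ∈ Icc (0:ℝ) 1 := ⟨zero_le_one, le_rfl⟩
  have hvarval : ∀ p q : ℝ, 0 ≤ p → p ≤ q → q ≤ 1 →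
      variationOnFromTo γ (Icc 0 1) p q = (eVariationOn γ (Icc p q)).toReal := by
    intro p q hp hpq hq
    rw [variationOnFromTo.eq_of_le γ _ hpq,
      inter_eq_self_of_subset_right (Icc_subset_Icc hp hq)]
  have hφσ_at : ∀ t ∈ Icc (0:ℝ) 1, φσ t = φ (a + t * (b - a)) - φ a := by
    intro t ht
    have hmem := sub_mem_Icc h0 hab h1 ht
    have hamem : a ∈ Icc (0:ℝ) 1 := ⟨h0, hab.trans h1⟩
    have haψ : a ≤ a + t * (b - a) := by nlinarith [ht.1, ht.2]
    have hadd := variationOnFromTo.add hlbvγ h0mem hamem hmem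
    have h2 : variationOnFromTo γ (Icc 0 1) a (a + t * (b - a))
        = (eVariationOn γ (Icc a (a + t * (b - a)))).toReal :=
      hvarval a _ h0 haψ hmem.2
    have h3 : φσ t = (eVariationOn σ (Icc 0 t)).toReal := by
      rw [hφσdef, variationOnFromTo.eq_of_le σ _ ht.1,
        inter_eq_self_of_subset_right (Icc_subset_Icc le_rfl ht.2)]
    rw [h3, hσvar 0 t ht.1, show a + 0 * (b - a) = a by ring]
    rw [h2] at hadd
    have e1 : φ (a + t * (b - a)) = variationOnFromTo γ (Icc 0 1) 0 (a + t * (b - a)) := rfl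
    have e2 : φ a = variationOnFromTo γ (Icc 0 1) 0 a := rfl
    rw [e1, e2]
    linarith
  have hφσ1 : φσ 1 = ℓ := by
    rw [hφσdef, hℓdef, variationOnFromTo.eq_of_le σ _ zero_le_one, inter_self]
    rfl
  have hℓeq : φ a + ℓ = φ b := by
    have := hφσ_at 1 h1mem
    rw [hφσ1, show a + 1 * (b - a) = b by ring] at this
    linarith
  have hpt : ∀ x ∈ Icc 0 ℓ, naturalParameterization σ (Icc 0 1) 0 x
      = naturalParameterization γ (Icc 0 1) 0 (φ a + x) := by
    intro x hx
    have hsurj := phi_surj hσcont hσBV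
    rw [← hφσdef, hφσ1] at hsurj
    obtain ⟨t, ht, hxt⟩ : ∃ t ∈ Icc (0:ℝ) 1, φσ t = x := by
      have : x ∈ φσ '' Icc 0 1 := hsurj ▸ hx
      obtain ⟨t, ht, hxt⟩ := this
      exact ⟨t, ht, hxt⟩
    have hL : naturalParameterization σ (Icc 0 1) 0 x = σ t := by
      rw [← hxt]; exact nat_param_eq hlbvσ ht
    have hmem := sub_mem_Icc h0 hab h1 ht
    have hφax : φ a + x = φ (a + t * (b - a)) := by
      have := hφσ_at t ht
      rw [hxt] at this
      linarith
    have hR : naturalParameterization γ (Icc 0 1) 0 (φ a + x) = γ (a + t * (b - a)) := by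
      rw [hφax, hφdef]
      exact nat_param_eq hlbvγ hmem
    rw [hL, hR]
  rw [pathIntegral, ← hℓdef]
  calc (∫⁻ x in Icc (0:ℝ) ℓ, g (naturalParameterization σ (Icc 0 1) 0 x))
      = ∫⁻ x in Icc (0:ℝ) ℓ, g (naturalParameterization γ (Icc 0 1) 0 (φ a + x)) := by
        refine setLIntegral_congr_fun measurableSet_Icc (fun x hx => ?_)
        rw [hpt x hx]
    _ = ∫⁻ y in Icc (φ a) (φ a + ℓ), g (naturalParameterization γ (Icc 0 1) 0 y) := by
        rw [(measurePreserving_add_left volume (φ a)).setLIntegral_comp_emb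
          (Homeomorph.addLeft (φ a)).measurableEmbedding
          (fun y => g (naturalParameterization γ (Icc 0 1) 0 y)) (Icc 0 ℓ),
          image_const_add_Icc, add_zero]
    _ = ∫⁻ y in Icc (φ a) (φ b), g (naturalParameterization γ (Icc 0 1) 0 y) := by
        rw [hℓeq]

end Helpers

/-- gluing of upper gradients along a closed set where a continuous
function agrees with a Newtonian function. -/
theorem stmt10 {X : Type*} [MetricSpace X] [MeasurableSpace X]
    (μ : Measure X) (p : ℝ) (hp : 1 ≤ p)
    (f : X → ℝ) (hf : MemN1p p μ f)
    (g : X → ℝ≥0∞) (hg : IsUpperGradient g f) (hgLp : ∫⁻ x, g x ^ p ∂μ < ⊤)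
    (ft : X → ℝ) (hftc : Continuous ft) (hftLp : MemLp ft (ENNReal.ofReal p) μ)
    (K : Set X) (hK : IsClosed K) (hagree : ∀ x ∈ K, ft x = f x)
    (hout : IsUpperGradientOn g ft Kᶜ) :
    IsUpperGradient g ft ∧ MemN1p p μ ft := by
  have h0mem : (0:ℝ) ∈ Icc (0:ℝ) 1 := ⟨le_rfl, zero_le_one⟩
  have h1mem : (1:ℝ) ∈ Icc (0:ℝ) 1 := ⟨zero_le_one, le_rfl⟩
  have hug : IsUpperGradient g ft := by
    intro γ hγrect _
    obtain ⟨hγc, hγfin⟩ := hγrect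
    by_cases hK1 : ∀ t ∈ Icc (0:ℝ) 1, γ t ∈ Kᶜ
    · exact hout γ ⟨hγc, hγfin⟩ hK1
    push_neg at hK1
    obtain ⟨t₀, ht₀, ht₀K⟩ := hK1
    rw [mem_compl_iff, not_not] at ht₀K
    have hBV : eVariationOn γ (Icc 0 1) ≠ ⊤ := hγfin.ne
    have hlbv : LocallyBoundedVariationOn γ (Icc 0 1) :=
      BoundedVariationOn.locallyBoundedVariationOn hBV
    set φ := variationOnFromTo γ (Icc 0 1) 0 with hφdef
    set N := naturalParameterization γ (Icc 0 1) 0 with hNdef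
    have hφmono : MonotoneOn φ (Icc 0 1) := variationOnFromTo.monotoneOn hlbv h0mem
    have hφ0 : φ 0 = 0 := variationOnFromTo.self _ _ _
    have hφ1 : φ 1 = (curveLen γ).toReal := by
      rw [hφdef, variationOnFromTo.eq_of_le γ _ zero_le_one, inter_self]; rfl
    have hPI : pathIntegral g γ = ∫⁻ x in Icc (φ 0) (φ 1), g (N x) := by
      rw [hφ0, hφ1]; rfl
    set T := {t : ℝ | t ∈ Icc (0:ℝ) 1 ∧ γ t ∈ K} with hTdef
    have hTne : T.Nonempty := ⟨t₀, ht₀, ht₀K⟩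
    have hTclosed : IsClosed T := by
      have hTeq : T = Icc 0 1 ∩ γ ⁻¹' K := rfl
      rw [hTeq]
      exact hγc.preimage_isClosed_of_isClosed isClosed_Icc hK
    have hTcompact : IsCompact T :=
      IsCompact.of_isClosed_subset isCompact_Icc hTclosed (fun t ht => ht.1)
    have haT : sInf T ∈ T := hTcompact.sInf_mem hTne
    have hbT : sSup T ∈ T := hTcompact.sSup_mem hTne
    set a := sInf T
    set b := sSup T
    have hab : a ≤ b := csInf_le hTcompact.bddBelow hbT
    have ha01 : a ∈ Icc (0:ℝ) 1 := haT.1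
    have hb01 : b ∈ Icc (0:ℝ) 1 := hbT.1
    have hmid : ENNReal.ofReal |f (γ b) - f (γ a)| ≤ ∫⁻ x in Icc (φ a) (φ b), g (N x) := by
      have h2 := hg _ (sub_rect hγc hBV ha01.1 hab hb01.2) (fun t _ => mem_univ _)
      rw [subcurve_pathIntegral hγc hBV g ha01.1 hab hb01.2] at h2
      simp only [one_mul, zero_mul, add_zero] at h2
      rw [show a + (b - a) = b by ring] at h2
      exact h2
    have hleft : ENNReal.ofReal |ft (γ a) - ft (γ 0)| ≤ ∫⁻ x in Icc (φ 0) (φ a), g (N x) := by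
      rcases eq_or_lt_of_le ha01.1 with ha0 | ha0
      · rw [← ha0]; simp
      by_cases htop : (∫⁻ x in Icc (φ 0) (φ a), g (N x)) = ⊤
      · rw [htop]; exact le_top
      have hbnd : ∀ a' ∈ Ioo (0:ℝ) a, |ft (γ a') - ft (γ 0)|
          ≤ (∫⁻ x in Icc (φ 0) (φ a), g (N x)).toReal := by
        intro a' ha'
        have ha'le1 : a' ≤ 1 := ha'.2.le.trans ha01.2
        have hrect := sub_rect hγc hBV (le_refl (0:ℝ)) ha'.1.le ha'le1
        have hin : ∀ t ∈ Icc (0:ℝ) 1, (fun t => γ (0 + t * (a' - 0))) t ∈ Kᶜ := by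
          intro t ht
          simp only [mem_compl_iff]
          intro hmemK
          have hv01 : (0:ℝ) + t * (a' - 0) ∈ Icc (0:ℝ) 1 :=
            sub_mem_Icc le_rfl ha'.1.le ha'le1 ht
          have hmemT : (0:ℝ) + t * (a' - 0) ∈ T := ⟨hv01, hmemK⟩
          have hge : a ≤ 0 + t * (a' - 0) := csInf_le hTcompact.bddBelow hmemT
          nlinarith [ht.1, ht.2, ha'.1, ha'.2]
        have h2 := hout _ hrect hin
        rw [subcurve_pathIntegral hγc hBV g le_rfl ha'.1.le ha'le1] at h2
        simp only [one_mul, zero_mul, add_zero, zero_add, sub_zero] at h2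
        have h3 : (∫⁻ x in Icc (φ 0) (φ a'), g (N x)) ≤ ∫⁻ x in Icc (φ 0) (φ a), g (N x) :=
          lintegral_mono_set (Icc_subset_Icc le_rfl (hφmono ⟨ha'.1.le, ha'le1⟩ ha01 ha'.2.le))
        exact (ENNReal.ofReal_le_iff_le_toReal htop).1 (h2.trans h3)
      haveI hneb : (𝓝[Ioo (0:ℝ) a] a).NeBot := by
        rw [← mem_closure_iff_nhdsWithin_neBot, closure_Ioo (ne_of_lt ha0)]
        exact ⟨ha0.le, le_rfl⟩
      have htend : Tendsto (fun a' => |ft (γ a') - ft (γ 0)|) (𝓝[Ioo (0:ℝ) a] a)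
          (𝓝 |ft (γ a) - ft (γ 0)|) := by
        have hγa : Tendsto γ (𝓝[Ioo (0:ℝ) a] a) (𝓝 (γ a)) :=
          (hγc a ha01).mono_left (nhdsWithin_mono a
            (fun x hx => ⟨hx.1.le, hx.2.le.trans ha01.2⟩))
        exact (((hftc.sub continuous_const).abs).tendsto (γ a)).comp hγa
      have hlim := le_of_tendsto htend
        (eventually_mem_nhdsWithin.mono (fun a' ha' => hbnd a' ha'))
      rw [← ENNReal.ofReal_toReal htop]
      exact ENNReal.ofReal_le_ofReal hlim
    have hright : ENNReal.ofReal |ft (γ 1) - ft (γ b)| ≤ ∫⁻ x in Icc (φ b) (φ 1), g (N x) := by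
      rcases eq_or_lt_of_le hb01.2 with hb1 | hb1
      · rw [hb1]; simp
      by_cases htop : (∫⁻ x in Icc (φ b) (φ 1), g (N x)) = ⊤
      · rw [htop]; exact le_top
      have hbnd : ∀ b' ∈ Ioo b 1, |ft (γ 1) - ft (γ b')|
          ≤ (∫⁻ x in Icc (φ b) (φ 1), g (N x)).toReal := by
        intro b' hb'
        have hb'0 : (0:ℝ) ≤ b' := hb01.1.trans hb'.1.le
        have hrect := sub_rect hγc hBV hb'0 hb'.2.le (le_refl (1:ℝ))
        have hin : ∀ t ∈ Icc (0:ℝ) 1, (fun t => γ (b' + t * (1 - b'))) t ∈ Kᶜ := by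
          intro t ht
          simp only [mem_compl_iff]
          intro hmemK
          have hv01 : b' + t * (1 - b') ∈ Icc (0:ℝ) 1 := sub_mem_Icc hb'0 hb'.2.le le_rfl ht
          have hmemT : b' + t * (1 - b') ∈ T := ⟨hv01, hmemK⟩
          have hle : b' + t * (1 - b') ≤ b := le_csSup hTcompact.bddAbove hmemT
          nlinarith [ht.1, ht.2, hb'.1, hb'.2]
        have h2 := hout _ hrect hin
        rw [subcurve_pathIntegral hγc hBV g hb'0 hb'.2.le le_rfl] at h2
        simp only [one_mul, zero_mul, add_zero] at h2
        rw [show b' + (1 - b') = 1 by ring] at h2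
        have h3 : (∫⁻ x in Icc (φ b') (φ 1), g (N x)) ≤ ∫⁻ x in Icc (φ b) (φ 1), g (N x) :=
          lintegral_mono_set (Icc_subset_Icc (hφmono hb01 ⟨hb'0, hb'.2.le⟩ hb'.1.le) le_rfl)
        exact (ENNReal.ofReal_le_iff_le_toReal htop).1 (h2.trans h3)
      haveI hneb : (𝓝[Ioo b 1] b).NeBot := by
        rw [← mem_closure_iff_nhdsWithin_neBot, closure_Ioo (ne_of_lt hb1)]
        exact ⟨le_rfl, hb1.le⟩
      have htend : Tendsto (fun b' => |ft (γ 1) - ft (γ b')|) (𝓝[Ioo b 1] b)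
          (𝓝 |ft (γ 1) - ft (γ b)|) := by
        have hγb : Tendsto γ (𝓝[Ioo b 1] b) (𝓝 (γ b)) :=
          (hγc b hb01).mono_left (nhdsWithin_mono b
            (fun x hx => ⟨hb01.1.trans hx.1.le, hx.2.le⟩))
        have hc2 : Continuous (fun x : X => |ft (γ 1) - ft x|) :=
          (continuous_const.sub hftc).abs
        exact (hc2.tendsto (γ b)).comp hγb
      have hlim := le_of_tendsto htend
        (eventually_mem_nhdsWithin.mono (fun b' hb' => hbnd b' hb'))
      rw [← ENNReal.ofReal_toReal htop]
      exact ENNReal.ofReal_le_ofReal hlim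
    have hφa : φ 0 ≤ φ a := hφmono h0mem ha01 ha01.1
    have hφab : φ a ≤ φ b := hφmono ha01 hb01 hab
    have hφb : φ b ≤ φ 1 := hφmono hb01 h1mem hb01.2
    have e1 : ft (γ a) = f (γ a) := hagree _ haT.2
    have e2 : ft (γ b) = f (γ b) := hagree _ hbT.2
    calc ENNReal.ofReal |ft (γ 1) - ft (γ 0)|
        ≤ ENNReal.ofReal (|ft (γ a) - ft (γ 0)| + |f (γ b) - f (γ a)|
            + |ft (γ 1) - ft (γ b)|) := by
          apply ENNReal.ofReal_le_ofReal
          have hsplit : ft (γ 1) - ft (γ 0)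
              = (ft (γ a) - ft (γ 0)) + (f (γ b) - f (γ a)) + (ft (γ 1) - ft (γ b)) := by
            rw [← e1, ← e2]; ring
          rw [hsplit]
          exact (abs_add_le _ _).trans (add_le_add_left (abs_add_le _ _) _)
      _ = ENNReal.ofReal |ft (γ a) - ft (γ 0)| + ENNReal.ofReal |f (γ b) - f (γ a)|
          + ENNReal.ofReal |ft (γ 1) - ft (γ b)| := by
          rw [ENNReal.ofReal_add (by positivity) (abs_nonneg _),
            ENNReal.ofReal_add (abs_nonneg _) (abs_nonneg _)]
      _ ≤ (∫⁻ x in Icc (φ 0) (φ a), g (N x)) + (∫⁻ x in Icc (φ a) (φ b), g (N x))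
          + (∫⁻ x in Icc (φ b) (φ 1), g (N x)) := add_le_add (add_le_add hleft hmid) hright
      _ = ∫⁻ x in Icc (φ 0) (φ 1), g (N x) := by
          rw [S5add _ hφa hφab, S5add _ (hφa.trans hφab) hφb]
      _ = pathIntegral g γ := hPI.symm
  exact ⟨hug, hftLp, g, hug, hgLp⟩
end
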